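/- arXiv:1812.05650 — 5 statements merged into one kernel-verified Lean document; each statement's English description precedes it below -/
import Mathlib

section
/- Let G be a graph in which every vertex has odd degree and which contains exactly p hamiltonian cycles, where p is a prime number. Then G is 3-connected. -/
open SimpleGraph

/-- The set of edge sets of hamiltonian cycles of `G` (hamiltonian cycles are counted
as subgraphs, i.e. by their edge sets). -/
def hamCycleSets {V : Type*} (G : SimpleGraph V) : Set (Set (Sym2 V)) :=
  letI := Classical.decEq V
  {s | ∃ (v : V) (w : G.Walk v v), w.IsHamiltonianCycle ∧ {e | e ∈ w.edges} = s}

/-- The number of hamiltonian cycles of `G`, counted as subgraphs. -/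
noncomputable def hamCount {V : Type*} (G : SimpleGraph V) : ℕ := (hamCycleSets G).ncard

/-- The set of edge sets of cycles of length `k` in `G`. -/
def cycleSets {V : Type*} (G : SimpleGraph V) (k : ℕ) : Set (Set (Sym2 V)) :=
  {s | ∃ (v : V) (w : G.Walk v v), w.IsCycle ∧ w.length = k ∧ {e | e ∈ w.edges} = s}

/-- The number of cycles of length `k` in `G`, counted as subgraphs. -/
noncomputable def cycleCount {V : Type*} (G : SimpleGraph V) (k : ℕ) : ℕ := (cycleSets G k).ncard

/-- The set of edge sets of hamiltonian paths of `G`. -/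
def hamPathSets {V : Type*} (G : SimpleGraph V) : Set (Set (Sym2 V)) :=
  letI := Classical.decEq V
  {s | ∃ (u v : V) (w : G.Walk u v), w.IsHamiltonian ∧ {e | e ∈ w.edges} = s}

/-- The number of hamiltonian paths of `G`, counted as subgraphs. -/
noncomputable def hamPathCount {V : Type*} (G : SimpleGraph V) : ℕ := (hamPathSets G).ncard

/-- The degree of the vertex `v` in `G`. -/
noncomputable def vdeg {V : Type*} (G : SimpleGraph V) (v : V) : ℕ := (G.neighborSet v).ncard

/-- `G` contains a subdivision of `H`: there are branch vertices (an injective image of the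
vertices of `H`) joined by internally disjoint paths, one for each edge of `H`, whose internal
vertices avoid all branch vertices. -/
def ContainsSubdivision {V W : Type*} (G : SimpleGraph V) (H : SimpleGraph W) : Prop :=
  ∃ (f : W → V) (P : ∀ a b : W, H.Adj a b → G.Walk (f a) (f b)),
    Function.Injective f ∧
    (∀ a b (h : H.Adj a b), (P a b h).IsPath) ∧
    (∀ a b (h : H.Adj a b) (c : W), f c ∈ (P a b h).support → c = a ∨ c = b) ∧
    (∀ a b (h : H.Adj a b) (c d : W) (h' : H.Adj c d), s(a, b) ≠ s(c, d) →
      ∀ v, v ∈ (P a b h).support → v ∈ (P c d h').support →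
        (v = f a ∨ v = f b) ∧ (v = f c ∨ v = f d))

/-- A graph is planar iff (by Kuratowski's theorem) it contains no subdivision of `K₅`
nor of `K₃,₃`. -/
def PlanarGraph {V : Type*} (G : SimpleGraph V) : Prop :=
  ¬ ContainsSubdivision G (completeGraph (Fin 5)) ∧
  ¬ ContainsSubdivision G (completeBipartiteGraph (Fin 3) (Fin 3))

/-- A graph is `3`-connected if it has at least `4` vertices and remains connected after
the deletion of any set of at most `2` vertices. -/
def ThreeConnected {V : Type*} [Fintype V] (G : SimpleGraph V) : Prop :=
  4 ≤ Fintype.card V ∧ ∀ S : Set V, S.ncard ≤ 2 → (G.induce Sᶜ).Connected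

namespace HamAux

open SimpleGraph Walk

variable {V : Type*}

/-- The edge set of a walk, as a `Set`. -/
def edgesSet {G : SimpleGraph V} {u v : V} (w : G.Walk u v) : Set (Sym2 V) := {e | e ∈ w.edges}

/-- The set of path-walks from `a` to `b` whose support is exactly `U`. -/
def walkSet (G : SimpleGraph V) (a b : V) (U : Set V) : Set (G.Walk a b) :=
  {w | w.IsPath ∧ ∀ v, v ∈ w.support ↔ v ∈ U}

section Basic

variable {G : SimpleGraph V} {a b u v x : V}


variable {G : SimpleGraph V} {a b u v x : V}

/-- A nontrivial path cannot be a loop. -/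
lemma IsPath.eq_nil_of_loop {w : G.Walk u u} (hw : w.IsPath) : w = Walk.nil := by
  cases w with
  | nil => rfl
  | cons h q => rw [cons_isPath_iff] at hw; exact absurd q.end_mem_support hw.2

/-- A path is determined by its edge set. -/
lemma path_eq_of_edges : ∀ {u v : V} (p q : G.Walk u v), p.IsPath → q.IsPath →
    (∀ e, e ∈ p.edges ↔ e ∈ q.edges) → p = q := by
  intro u v p
  induction p with
  | @nil u0 =>
    intro q hp hq h
    cases q with
    | nil => rfl
    | @cons _ e _ h' q' => exact absurd ((h s(u0, e)).mpr (by simp)) (by simp)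
  | @cons u c v hadj p' ih =>
    intro q hp hq h
    cases q with
    | nil => exact absurd ((h s(u, c)).mp (by simp)) (by simp)
    | @cons _ d _ hadj' q' =>
      rw [cons_isPath_iff] at hp hq
      have hedge : s(u, c) ∈ (Walk.cons hadj' q').edges := (h _).mp (by simp)
      rw [edges_cons, List.mem_cons] at hedge
      have hcd : c = d := by
        rcases hedge with heq | hin
        · rw [Sym2.congr_right] at heq; exact heq
        · exact absurd (q'.fst_mem_support_of_mem_edges hin) hq.2
      subst hcd
      have hiff : ∀ e, e ∈ p'.edges ↔ e ∈ q'.edges := by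
        intro e
        constructor
        · intro he
          have : e ∈ (Walk.cons hadj' q').edges := (h e).mp (by simp [he])
          rw [edges_cons, List.mem_cons] at this
          rcases this with rfl | hin
          · exact absurd (p'.fst_mem_support_of_mem_edges he) hp.2
          · exact hin
        · intro he
          have : e ∈ (Walk.cons hadj p').edges := (h e).mpr (by simp [he])
          rw [edges_cons, List.mem_cons] at this
          rcases this with rfl | hin
          · exact absurd (q'.fst_mem_support_of_mem_edges he) hq.2
          · exact hin
      exact congrArg (Walk.cons hadj) (ih q' hp.1 hq.1 hiff)

/-- If a path from `a` to `b` has an interior vertex, it does not use the edge `s(a,b)`. -/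
lemma sab_not_mem_edges (w : G.Walk a b) (hw : w.IsPath)
    (hx : x ∈ w.support) (hxa : x ≠ a) (hxb : x ≠ b) : s(a, b) ∉ w.edges := by
  intro he
  cases w with
  | nil => simp only [support_nil, List.mem_singleton] at hx; exact hxa hx
  | @cons _ c _ hadj w' =>
    rw [cons_isPath_iff] at hw
    rw [edges_cons, List.mem_cons] at he
    rcases he with heq | hin
    · have hbc : b = c := Sym2.congr_right.mp heq
      subst hbc
      have : w' = Walk.nil := IsPath.eq_nil_of_loop hw.1
      subst this
      simp only [support_cons, support_nil, List.mem_cons, List.mem_singleton] at hx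
      rcases hx with rfl | rfl | h
      · exact hxa rfl
      · exact hxb rfl
      · exact absurd h List.not_mem_nil
    · exact absurd (w'.fst_mem_support_of_mem_edges hin) hw.2

/-- Splitting an append at the junction point. -/
lemma takeUntil_dropUntil_append [DecidableEq V] :
    ∀ {u v x : V} (p : G.Walk u v) (q : G.Walk v x),
      p.support.count v = 1 → v ∉ q.support.tail →
      ∀ h : v ∈ (p.append q).support,
        (p.append q).takeUntil v h = p ∧ (p.append q).dropUntil v h = q := by
  intro u v x p
  induction p with
  | nil =>
    intro q h1 h2 h
    cases q with
    | nil => constructor <;> simp [takeUntil, dropUntil]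
    | cons hadj q' => constructor <;> simp [takeUntil, dropUntil]
  | @cons u m ve hadj p' ih =>
    intro q h1 h2 h
    have hvp' : ve ∈ p'.support := p'.end_mem_support
    have hu : u ≠ ve := by
      rintro rfl
      rw [support_cons, List.count_cons_self] at h1
      have := List.count_pos_iff.mpr hvp'
      omega
    have h1' : p'.support.count ve = 1 := by
      rw [support_cons, List.count_cons_of_ne hu] at h1
      exact h1
    have hmem : ve ∈ (p'.append q).support := by
      rw [mem_support_append_iff]; exact Or.inl hvp'
    obtain ⟨ht, hd⟩ := ih q h1' h2 hmem
    constructor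
    · show (Walk.cons hadj (p'.append q)).takeUntil ve h = Walk.cons hadj p'
      simp only [takeUntil]
      rw [dif_neg hu]
      exact congrArg (Walk.cons hadj) ht
    · show (Walk.cons hadj (p'.append q)).dropUntil ve h = q
      simp only [dropUntil]
      rw [dif_neg hu]
      exact hd

end Basic

/-- Parity flip helper. -/
lemma parity_flip [Finite V] (s t : Set V) (c : V)
    (h1 : ∀ u, u ≠ c → (u ∈ s ↔ u ∈ t)) (h2 : c ∈ s ↔ c ∉ t)
    (hodd : Odd t.ncard) : Even s.ncard := by
  by_cases hct : c ∈ t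
  · have hs : s = t \ {c} := by
      ext u
      by_cases hu : u = c
      · subst hu
        exact iff_of_false (fun hc => (h2.mp hc) hct) (fun hc => hc.2 rfl)
      · rw [h1 u hu]
        simp [hu]
    rw [hs, Set.ncard_diff_singleton_of_mem hct]
    exact Nat.Odd.sub_odd hodd odd_one
  · have hs : s = insert c t := by
      ext u
      by_cases hu : u = c
      · subst hu
        simp only [Set.mem_insert_iff, true_or, iff_true]
        exact h2.mpr hct
      · rw [h1 u hu]
        simp [hu]
    rw [hs, Set.ncard_insert_of_notMem hct]
    exact Odd.add_one hodd

section Toggle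

variable [DecidableEq V]

/-- The graph `G` with the edge `s(a,b)` toggled. -/
def toggle (G : SimpleGraph V) (a b : V) : SimpleGraph V where
  Adj x y := if s(x, y) = s(a, b) then ¬G.Adj x y ∧ x ≠ y else G.Adj x y
  symm := by
    constructor
    intro x y hxy
    have h1 : s(y, x) = s(x, y) := Sym2.eq_swap
    by_cases h : s(x, y) = s(a, b)
    · rw [if_pos h] at hxy
      rw [if_pos (h1.trans h)]
      exact ⟨fun hyx => hxy.1 hyx.symm, hxy.2.symm⟩
    · rw [if_neg h] at hxy
      rw [if_neg (fun hc => h (h1.symm.trans hc))]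
      exact hxy.symm
  loopless := by
    constructor
    intro x hx
    split_ifs at hx with h
    · exact hx.2 rfl
    · exact G.loopless.irrefl x hx

lemma toggle_adj {G : SimpleGraph V} {a b x y : V} :
    (toggle G a b).Adj x y ↔ if s(x, y) = s(a, b) then ¬G.Adj x y ∧ x ≠ y else G.Adj x y :=
  Iff.rfl

lemma toggle_adj_of_ne {G : SimpleGraph V} {a b x y : V} (h : s(x, y) ≠ s(a, b)) :
    (toggle G a b).Adj x y ↔ G.Adj x y := by
  rw [toggle_adj, if_neg h]

lemma toggle_neighborSet_of_ne {G : SimpleGraph V} {a b v : V} (hva : v ≠ a) (hvb : v ≠ b) :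
    (toggle G a b).neighborSet v = G.neighborSet v := by
  ext u
  simp only [mem_neighborSet]
  rw [toggle_adj_of_ne]
  intro hco
  rw [Sym2.eq_iff] at hco
  rcases hco with ⟨h1, _⟩ | ⟨h1, _⟩
  · exact hva h1
  · exact hvb h1

/-- Toggling at `b` flips the parity of the relative degree of `b`. -/
lemma toggle_parity [Finite V] {G : SimpleGraph V} {a b : V} (hab : a ≠ b) (U : Set V)
    (haU : a ∈ U) (hodd : Odd ((G.neighborSet b ∩ U).ncard)) :
    Even (((toggle G a b).neighborSet b ∩ U).ncard) := by
  apply parity_flip _ _ a _ _ hodd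
  · intro u hu
    have hne : s(b, u) ≠ s(a, b) := by
      intro hco
      rw [Sym2.eq_iff] at hco
      rcases hco with ⟨hba, _⟩ | ⟨_, hua⟩
      · exact hab hba.symm
      · exact hu hua
    simp only [Set.mem_inter_iff, mem_neighborSet]
    rw [toggle_adj_of_ne hne]
  · have heq : s(b, a) = s(a, b) := Sym2.eq_swap
    simp only [Set.mem_inter_iff, mem_neighborSet, toggle_adj, if_pos heq]
    constructor
    · rintro ⟨⟨hna, _⟩, _⟩ ⟨hadj, _⟩; exact hna hadj
    · intro hn
      refine ⟨⟨fun hadj => hn ⟨hadj, haU⟩, fun e => hab e.symm⟩, haU⟩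

/-- Counting walks with prescribed support is invariant under changing the graph
only at the edge `s(a,b)`, provided `U` has an interior vertex. -/
lemma ncard_walkSet_congr (G G' : SimpleGraph V) (a b : V) (U : Set V)
    (hx : ∃ c ∈ U, c ≠ a ∧ c ≠ b)
    (hagree : ∀ x y : V, s(x, y) ≠ s(a, b) → (G.Adj x y ↔ G'.Adj x y)) :
    (walkSet G a b U).ncard = (walkSet G' a b U).ncard := by
  have keyE : ∀ (G₁ G₂ : SimpleGraph V),
      (∀ x y : V, s(x, y) ≠ s(a, b) → (G₁.Adj x y ↔ G₂.Adj x y)) →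
      ∀ e : Sym2 V, e ∈ G₁.edgeSet → e ≠ s(a, b) → e ∈ G₂.edgeSet := by
    intro G₁ G₂ hag e
    induction e using Sym2.ind with
    | _ x y => intro h1 h2; exact (hag x y h2).mp h1
  have keyW : ∀ (G₁ G₂ : SimpleGraph V),
      (∀ x y : V, s(x, y) ≠ s(a, b) → (G₁.Adj x y ↔ G₂.Adj x y)) →
      ∀ w ∈ walkSet G₁ a b U, ∀ e ∈ w.edges, e ∈ G₂.edgeSet := by
    intro G₁ G₂ hag w hw e he
    obtain ⟨c, hcU, hca, hcb⟩ := hx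
    have hne : e ≠ s(a, b) := by
      rintro rfl
      exact sab_not_mem_edges w hw.1 ((hw.2 c).mpr hcU) hca hcb he
    exact keyE G₁ G₂ hag e (w.edges_subset_edgeSet he) hne
  have hagree' : ∀ x y : V, s(x, y) ≠ s(a, b) → (G'.Adj x y ↔ G.Adj x y) :=
    fun x y h => (hagree x y h).symm
  have e : ↥(walkSet G a b U) ≃ ↥(walkSet G' a b U) := {
    toFun := fun w => ⟨w.1.transfer G' (keyW G G' hagree w.1 w.2), by
      constructor
      · exact w.2.1.transfer _
      · intro v
        rw [support_transfer]
        exact w.2.2 v⟩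
    invFun := fun w => ⟨w.1.transfer G (keyW G' G hagree' w.1 w.2), by
      constructor
      · exact w.2.1.transfer _
      · intro v
        rw [support_transfer]
        exact w.2.2 v⟩
    left_inv := fun w => by
      apply Subtype.ext
      simp only [transfer_transfer, transfer_self]
    right_inv := fun w => by
      apply Subtype.ext
      simp only [transfer_transfer, transfer_self] }
  rw [← Nat.card_coe_set_eq, ← Nat.card_coe_set_eq]
  exact Nat.card_congr e

end Toggle

section RotSec
variable {G : SimpleGraph V}
lemma list_split_unique {α : Type*} :
    ∀ (s1 : List α) (s2 r1 r2 : List α) (v : α), v ∉ s1 → v ∉ s2 →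
      s1 ++ v :: r1 = s2 ++ v :: r2 → s1 = s2 := by
  intro s1
  induction s1 with
  | nil =>
    intro s2 r1 r2 v _ hv2 h
    cases s2 with
    | nil => rfl
    | cons c s2' =>
      exfalso
      rw [List.nil_append, List.cons_append] at h
      obtain ⟨rfl, h2⟩ := List.cons.inj h
      exact hv2 List.mem_cons_self
  | cons c s1' ih =>
    intro s2 r1 r2 v hv1 hv2 h
    cases s2 with
    | nil =>
      exfalso
      rw [List.cons_append, List.nil_append] at h
      obtain ⟨rfl, h2⟩ := List.cons.inj h
      exact hv1 List.mem_cons_self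
    | cons c2 s2' =>
      rw [List.cons_append, List.cons_append] at h
      obtain ⟨rfl, h2⟩ := List.cons.inj h
      rw [ih s2' r1 r2 v (fun hm => hv1 (List.mem_cons_of_mem _ hm))
        (fun hm => hv2 (List.mem_cons_of_mem _ hm)) h2]

section Rot

variable [DecidableEq V] {a z y : V}

lemma takeUntil_congr {u v x : V} {w1 w2 : G.Walk u v} (heq : w1 = w2) (h : x ∈ w1.support) :
    w1.takeUntil x h = w2.takeUntil x (heq ▸ h) := by subst heq; rfl

lemma dropUntil_congr {u v x : V} {w1 w2 : G.Walk u v} (heq : w1 = w2) (h : x ∈ w1.support) :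
    w1.dropUntil x h = w2.dropUntil x (heq ▸ h) := by subst heq; rfl

/-- Walks from a common start with equal supports are equal (as bundled walks). -/
lemma walk_eq_of_support_eq : ∀ {z1 z2 : V} (w1 : G.Walk a z1) (w2 : G.Walk a z2),
    w1.support = w2.support → (⟨z1, w1⟩ : Σ c : V, G.Walk a c) = ⟨z2, w2⟩ := by
  intro z1 z2 w1
  induction w1 with
  | nil =>
    intro w2 hsup
    cases w2 with
    | nil => rfl
    | cons h2 q2 =>
      rw [support_nil, support_cons, support_eq_cons q2] at hsup
      simp at hsup
  | @cons a0 c z1 hadj w1' ih =>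
    intro w2 hsup
    cases w2 with
    | nil =>
      rw [support_nil, support_cons, support_eq_cons w1'] at hsup
      simp at hsup
    | @cons _ c2 _ h2 q2 =>
      simp only [support_cons, List.cons.injEq, true_and] at hsup
      have hc : c = c2 := by
        have e1 : w1'.support.head? = some c := by rw [support_eq_cons]; rfl
        have e2 : q2.support.head? = some c2 := by rw [support_eq_cons]; rfl
        rw [hsup, e2] at e1
        exact (Option.some_inj.mp e1).symm
      subst hc
      have hsig := ih q2 hsup
      have hfst : z1 = z2 := congrArg Sigma.fst hsig
      subst hfst
      rw [sigma_mk_injective hsig]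

/-- Rotation of a path ending at `z` at a pivot `y`. -/
@[reducible] def rotAt (w : G.Walk a z) (y : V) (hy : y ∈ w.support) (hadj : G.Adj z y) :
    Σ c : V, G.Walk a c :=
  ⟨_, (w.takeUntil y hy).append (Walk.cons hadj.symm (w.dropUntil y hy).tail.reverse)⟩

variable {w : G.Walk a z}

lemma dropUntil_not_nil (hy : y ∈ w.support) (hne : y ≠ z) : ¬(w.dropUntil y hy).Nil :=
  not_nil_of_ne hne

lemma rotAt_support (hy : y ∈ w.support) (hadj : G.Adj z y) :
    (rotAt w y hy hadj).2.support =
      (w.takeUntil y hy).support ++ ((w.dropUntil y hy).tail.support).reverse := by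
  show ((w.takeUntil y hy).append _).support = _
  rw [support_append, support_cons, List.tail_cons, support_reverse]

lemma support_take_drop (hy : y ∈ w.support) (hne : y ≠ z) :
    w.support = (w.takeUntil y hy).support ++ (w.dropUntil y hy).tail.support := by
  conv_lhs => rw [← take_spec w hy]
  rw [support_append, support_tail_of_not_nil _ (dropUntil_not_nil hy hne)]

lemma rotAt_support_perm (hy : y ∈ w.support) (hadj : G.Adj z y) :
    (rotAt w y hy hadj).2.support.Perm w.support := by
  rw [rotAt_support hy hadj, support_take_drop hy hadj.ne']
  exact List.Perm.append_left _ (List.reverse_perm _)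

lemma rotAt_isPath (hy : y ∈ w.support) (hadj : G.Adj z y) (hw : w.IsPath) :
    (rotAt w y hy hadj).2.IsPath := by
  rw [isPath_def, (rotAt_support_perm hy hadj).nodup_iff]
  exact hw.support_nodup

lemma rotAt_fst (hy : y ∈ w.support) (hadj : G.Adj z y) :
    (rotAt w y hy hadj).1 = (w.dropUntil y hy).getVert 1 := rfl

lemma rotAt_mem_support (hy : y ∈ w.support) (hadj : G.Adj z y) :
    y ∈ (rotAt w y hy hadj).2.support :=
  (rotAt_support_perm hy hadj).mem_iff.mpr hy

lemma rotAt_adj (hy : y ∈ w.support) (hadj : G.Adj z y) :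
    G.Adj (rotAt w y hy hadj).1 y :=
  ((w.dropUntil y hy).adj_snd (dropUntil_not_nil hy hadj.ne')).symm

lemma rotAt_fst_ne (hy : y ∈ w.support) (hadj : G.Adj z y) (hw : w.IsPath)
    (hd2 : ¬(w.dropUntil y hy).tail.Nil) :
    (rotAt w y hy hadj).1 ≠ z := by
  rw [rotAt_fst hy hadj]
  intro heq
  have htp : (w.dropUntil y hy).tail.IsPath :=
    (hw.dropUntil hy).tail
  have hcp : ((w.dropUntil y hy).tail.copy rfl heq.symm).IsPath := by
    rwa [isPath_copy]
  have hnil := IsPath.eq_nil_of_loop hcp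
  apply hd2
  have hnil2 : ((w.dropUntil y hy).tail.copy rfl heq.symm).Nil := by
    rw [hnil]; exact Walk.Nil.nil
  rwa [nil_copy] at hnil2

/-- Take/drop of the rotated walk at the pivot. -/
lemma rotAt_take_drop (hy : y ∈ w.support) (hadj : G.Adj z y) (hw : w.IsPath) :
    ∀ hy' : y ∈ (rotAt w y hy hadj).2.support,
      (rotAt w y hy hadj).2.takeUntil y hy' = w.takeUntil y hy ∧
      (rotAt w y hy hadj).2.dropUntil y hy' =
        Walk.cons hadj.symm (w.dropUntil y hy).tail.reverse := by
  intro hy'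
  refine takeUntil_dropUntil_append (w.takeUntil y hy)
    (Walk.cons hadj.symm (w.dropUntil y hy).tail.reverse) ?_ ?_ hy'
  · exact count_support_takeUntil_eq_one w hy
  · rw [support_cons, List.tail_cons, support_reverse, List.mem_reverse,
      support_tail_of_not_nil _ (dropUntil_not_nil hy hadj.ne')]
    have hnd := (hw.dropUntil hy).support_nodup
    rw [support_eq_cons] at hnd
    exact (List.nodup_cons.mp hnd).1

lemma rotAt_back_cond (hy : y ∈ w.support) (hadj : G.Adj z y) (hw : w.IsPath)
    (hd2 : ¬(w.dropUntil y hy).tail.Nil) :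
    ∀ hy', ¬((rotAt w y hy hadj).2.dropUntil y hy').tail.Nil := by
  intro hy'
  rw [(rotAt_take_drop hy hadj hw hy').2]
  have key : ∀ {u v x : V} (h : G.Adj u v) (q : G.Walk v x), ¬q.Nil →
      ¬(Walk.cons h q).tail.Nil := by
    intro u v x h q hq
    cases q with
    | nil => exact absurd Walk.Nil.nil hq
    | cons _ _ => simp
  exact key _ _ (by rw [nil_iff_length_eq, length_reverse, ← nil_iff_length_eq]; exact hd2)

/-- Rotating twice at the same pivot gives back the original walk. -/
lemma rotAt_rotAt (hy : y ∈ w.support) (hadj : G.Adj z y) (hw : w.IsPath) :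
    ∀ (hy' : y ∈ (rotAt w y hy hadj).2.support) (hadj' : G.Adj (rotAt w y hy hadj).1 y),
      rotAt (rotAt w y hy hadj).2 y hy' hadj' = ⟨z, w⟩ := by
  intro hy' hadj'
  have key : ∀ {u v x : V} (h : G.Adj u v) (q : G.Walk v x),
      (Walk.cons h q).tail.reverse.support = q.reverse.support := by
    intro u v x h q
    cases q <;> simp
  apply walk_eq_of_support_eq
  rw [support_append, support_cons, List.tail_cons,
    (rotAt_take_drop hy hadj hw hy').1, (rotAt_take_drop hy hadj hw hy').2,
    key, Walk.reverse_reverse]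
  exact (support_take_drop hy hadj.ne').symm

/-- Distinct pivots yield rotations with distinct endpoints. -/
lemma rotAt_pivot_inj (hw : w.IsPath) {y1 y2 : V} (hy1 : y1 ∈ w.support) (hy2 : y2 ∈ w.support)
    (hadj1 : G.Adj z y1) (hadj2 : G.Adj z y2)
    (hfst : (rotAt w y1 hy1 hadj1).1 = (rotAt w y2 hy2 hadj2).1) : y1 = y2 := by
  rw [rotAt_fst, rotAt_fst] at hfst
  have hsp1 := support_take_drop hy1 hadj1.ne'
  have hsp2 := support_take_drop hy2 hadj2.ne'
  have hv1 : (w.dropUntil y1 hy1).tail.support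
      = (w.dropUntil y1 hy1).getVert 1 :: (w.dropUntil y1 hy1).tail.support.tail :=
    support_eq_cons _
  have hv2 : (w.dropUntil y2 hy2).tail.support
      = (w.dropUntil y2 hy2).getVert 1 :: (w.dropUntil y2 hy2).tail.support.tail :=
    support_eq_cons _
  have hnd := hw.support_nodup
  have hnotin : ∀ (y' : V) (hy' : y' ∈ w.support) (hne : y' ≠ z),
      (w.dropUntil y' hy').getVert 1 ∉ (w.takeUntil y' hy').support := by
    intro y' hy' hne hmem
    have h1 := hw.support_nodup
    rw [support_take_drop hy' hne, List.nodup_append] at h1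
    exact h1.2.2 _ hmem _ ((w.dropUntil y' hy').tail.start_mem_support) rfl
  have heq : (w.takeUntil y1 hy1).support ++
      ((w.dropUntil y1 hy1).getVert 1 :: (w.dropUntil y1 hy1).tail.support.tail)
      = (w.takeUntil y2 hy2).support ++
      ((w.dropUntil y1 hy1).getVert 1 :: (w.dropUntil y2 hy2).tail.support.tail) := by
    have hv2' : (w.dropUntil y2 hy2).tail.support
        = (w.dropUntil y1 hy1).getVert 1 :: (w.dropUntil y2 hy2).tail.support.tail := by
      rw [hfst]; exact hv2
    rw [← hv1, ← hv2', ← hsp1, ← hsp2]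
  have hts := list_split_unique _ _ _ _ _
    (hnotin y1 hy1 hadj1.ne')
    (by rw [hfst]; exact hnotin y2 hy2 hadj2.ne') heq
  have g1 : (w.takeUntil y1 hy1).support.getLast? = some y1 := by
    rw [List.getLast?_eq_getLast (support_ne_nil _), getLast_support]
  have g2 : (w.takeUntil y2 hy2).support.getLast? = some y2 := by
    rw [List.getLast?_eq_getLast (support_ne_nil _), getLast_support]
  rw [hts, g2] at g1
  exact (Option.some_inj.mp g1).symm

/-- The penultimate vertex of a walk. -/
def penult (w : G.Walk a z) : V := w.reverse.getVert 1

lemma reverse_not_nil (hnil : ¬w.Nil) : ¬w.reverse.Nil := by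
  rw [nil_iff_length_eq, length_reverse, ← nil_iff_length_eq]
  exact hnil

lemma penult_adj (hnil : ¬w.Nil) : G.Adj z (penult w) :=
  w.reverse.adj_snd (reverse_not_nil hnil)

lemma penult_mem (hnil : ¬w.Nil) : penult w ∈ w.support := by
  have h1 : penult w ∈ w.reverse.support := by
    rw [mem_support_iff_exists_getVert]
    refine ⟨1, rfl, ?_⟩
    rw [length_reverse]
    rw [not_nil_iff_lt_length] at hnil
    omega
  rw [support_reverse, List.mem_reverse] at h1
  exact h1

/-- The pivot has a trivial remainder iff it is the penultimate vertex. -/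
lemma dropUntil_tail_nil_iff (hy : y ∈ w.support) (hadj : G.Adj z y) (hw : w.IsPath)
    (hnil : ¬w.Nil) :
    (w.dropUntil y hy).tail.Nil ↔ y = penult w := by
  constructor
  · intro htn
    have hlen1 : (w.dropUntil y hy).length = 1 := by
      have := length_tail_add_one (dropUntil_not_nil hy hadj.ne')
      rw [nil_iff_length_eq] at htn
      omega
    show y = w.reverse.getVert 1
    conv_rhs => rw [← take_spec w hy]
    rw [reverse_append, getVert_append, length_reverse, hlen1, if_neg (by omega)]
    simp
  · intro hpen
    subst hpen
    have hrev := cons_tail_eq w.reverse (reverse_not_nil hnil)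
    have hw_eq : w = (w.reverse.tail.reverse).append
        (Walk.cons (w.reverse.adj_snd (reverse_not_nil hnil)).symm Walk.nil) := by
      conv_lhs => rw [← reverse_reverse w, ← hrev]
      rw [reverse_cons]
    have hqq : (w.reverse.tail.reverse).IsPath :=
      IsPath.reverse ((hw.reverse).tail)
    have hc1 : (w.reverse.tail.reverse).support.count (penult w) = 1 :=
      List.count_eq_one_of_mem hqq.support_nodup (w.reverse.tail.reverse).end_mem_support
    have hc2 : penult w ∉ (Walk.cons
        (w.reverse.adj_snd (reverse_not_nil hnil)).symm
        (Walk.nil : G.Walk z z)).support.tail := by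
      rw [support_cons, List.tail_cons, support_nil]
      simp only [List.mem_singleton]
      exact fun hc => (penult_adj hnil).ne' hc
    have hres := takeUntil_dropUntil_append _ _ hc1 hc2 (hw_eq ▸ hy)
    rw [dropUntil_congr hw_eq hy]
    erw [hres.2]
    exact Walk.Nil.nil

end Rot
end RotSec

section Thomason

variable [DecidableEq V]

/-- Paths from `a` covering exactly `U`, with arbitrary endpoint. -/
def HP (G : SimpleGraph V) (a : V) (U : Set V) : Type _ :=
  {pz : Σ c : V, G.Walk a c // pz.2.IsPath ∧ ∀ v, v ∈ pz.2.support ↔ v ∈ U}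

lemma HP_finite [Fintype V] (G : SimpleGraph V) (a : V) (U : Set V) : Finite (HP G a U) := by
  classical
  apply Finite.of_injective
    (fun P : HP G a U => (⟨P.1.1, ⟨P.1.2, P.2.1⟩⟩ : Σ c : V, G.Path a c))
  rintro ⟨⟨z1, w1⟩, h1⟩ ⟨⟨z2, w2⟩, h2⟩ h
  have hfst : z1 = z2 := congrArg Sigma.fst h
  subst hfst
  have h2' := sigma_mk_injective h
  have : w1 = w2 := congrArg Subtype.val h2'
  apply Subtype.ext
  exact congrArg (Sigma.mk z1) this

/-- The rotation relation on `HP`. -/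
def RotRel (G : SimpleGraph V) {a : V} {U : Set V} (P Q : HP G a U) : Prop :=
  ∃ (y : V) (hy : y ∈ P.1.2.support) (hadj : G.Adj P.1.1 y),
    ¬(P.1.2.dropUntil y hy).tail.Nil ∧ Q.1 = rotAt P.1.2 y hy hadj

lemma RotRel_irrefl (G : SimpleGraph V) {a : V} {U : Set V} (P : HP G a U) :
    ¬RotRel G P P := by
  rintro ⟨y, hy, hadj, hcond, heq⟩
  exact rotAt_fst_ne hy hadj P.2.1 hcond (congrArg Sigma.fst heq).symm

lemma RotRel_symm (G : SimpleGraph V) {a : V} {U : Set V} {P Q : HP G a U}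
    (h : RotRel G P Q) : RotRel G Q P := by
  obtain ⟨⟨zP, wP⟩, hP⟩ := P
  obtain ⟨⟨zQ, wQ⟩, hQ⟩ := Q
  obtain ⟨y, hy, hadj, hcond, heq⟩ := h
  have hfst : zQ = (rotAt wP y hy hadj).1 := congrArg Sigma.fst heq
  subst hfst
  have hsnd : wQ = (rotAt wP y hy hadj).2 := sigma_mk_injective heq
  subst hsnd
  exact ⟨y, rotAt_mem_support hy hadj, rotAt_adj hy hadj,
    rotAt_back_cond hy hadj hP.1 hcond _,
    (rotAt_rotAt hy hadj hP.1 _ _).symm⟩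

/-- The lollipop graph on `HP`. -/
def XG (G : SimpleGraph V) (a : V) (U : Set V) : SimpleGraph (HP G a U) where
  Adj P Q := RotRel G P Q ∨ RotRel G Q P
  symm := ⟨fun P Q h => Or.symm h⟩
  loopless := ⟨fun P h => by
    rcases h with h | h <;> exact RotRel_irrefl G P h⟩

lemma XG_adj_iff (G : SimpleGraph V) {a : V} {U : Set V} (P Q : HP G a U) :
    (XG G a U).Adj P Q ↔ RotRel G P Q :=
  ⟨fun h => h.elim id (RotRel_symm G), Or.inl⟩

/-- Thomason's lollipop lemma. -/
lemma thomason [Fintype V] (G : SimpleGraph V) (a b : V) (hab : a ≠ b)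
    (U : Set V) (ha : a ∈ U) (hb : b ∈ U)
    (hodd : ∀ v ∈ U, v ≠ a → v ≠ b → Odd ((G.neighborSet v ∩ U).ncard))
    (hbe : Even ((G.neighborSet b ∩ U).ncard)) :
    Even (walkSet G a b U).ncard := by
  classical
  haveI : Finite (HP G a U) := HP_finite G a U
  haveI : Fintype (HP G a U) := Fintype.ofFinite _
  haveI : DecidableRel (XG G a U).Adj := Classical.decRel _
  -- basic facts about elements of HP
  have hend_ne_a : ∀ P : HP G a U, P.1.1 ≠ a := by
    rintro ⟨⟨z, w⟩, hP⟩ hz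
    dsimp only at hz
    subst hz
    have hnil : w = Walk.nil := IsPath.eq_nil_of_loop hP.1
    have hbmem := (hP.2 b).mpr hb
    rw [hnil] at hbmem
    simp only [support_nil, List.mem_singleton] at hbmem
    exact hab hbmem.symm
  have hnotnil : ∀ P : HP G a U, ¬P.1.2.Nil :=
    fun P hn => hend_ne_a P hn.eq.symm
  have hend_mem : ∀ P : HP G a U, P.1.1 ∈ U := fun P => (P.2.2 _).mp P.1.2.end_mem_support
  -- the degree formula
  have hdeg : ∀ P : HP G a U, (XG G a U).degree P + 1 = (G.neighborSet P.1.1 ∩ U).ncard := by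
    rintro ⟨⟨z, w⟩, hP⟩
    set P : HP G a U := ⟨⟨z, w⟩, hP⟩ with hPdef
    have hwnil : ¬w.Nil := hnotnil P
    set pivset : Set V :=
      {y | ∃ (hy : y ∈ w.support) (hadj : G.Adj z y), ¬(w.dropUntil y hy).tail.Nil}
      with hpivdef
    have hPfst : (P.1).1 = z := rfl
    rw [hPfst]
    obtain ⟨F, hFval⟩ : ∃ F : V → HP G a U, ∀ y (h : y ∈ pivset),
        (F y).1 = rotAt w y h.choose h.choose_spec.choose := by
      refine ⟨fun y => if h : y ∈ pivset then
        ⟨rotAt w y h.choose h.choose_spec.choose, ?_, ?_⟩ else P, ?_⟩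
      · exact rotAt_isPath _ _ hP.1
      · intro v
        rw [(rotAt_support_perm _ _).mem_iff]
        exact hP.2 v
      · intro y h
        exact congrArg Subtype.val (dif_pos h)
    have himage : F '' pivset = (XG G a U).neighborSet P := by
      ext Q
      constructor
      · rintro ⟨y, hmem, rfl⟩
        show (XG G a U).Adj P (F y)
        rw [XG_adj_iff]
        exact ⟨y, hmem.choose, hmem.choose_spec.choose, hmem.choose_spec.choose_spec,
          (hFval y hmem).symm ▸ rfl⟩
      · intro hQ
        have hrot : RotRel G P Q := (XG_adj_iff G P Q).mp hQ
        obtain ⟨y, hy, hadj, hcond, heq⟩ := hrot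
        have hmem : y ∈ pivset := ⟨hy, hadj, hcond⟩
        refine ⟨y, hmem, ?_⟩
        apply Subtype.ext
        rw [hFval y hmem, ← heq]
    have hinj : Set.InjOn F pivset := by
      intro y1 h1 y2 h2 hFeq
      have e1 := hFval y1 h1
      have e2 := hFval y2 h2
      have : (rotAt w y1 h1.choose h1.choose_spec.choose).1
          = (rotAt w y2 h2.choose h2.choose_spec.choose).1 := by
        rw [← e1, ← e2, hFeq]
      exact rotAt_pivot_inj hP.1 _ _ _ _ this
    have hpiv_eq : pivset = (G.neighborSet z ∩ U) \ {penult w} := by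
      ext y
      constructor
      · rintro ⟨hy, hadj, hcond⟩
        refine ⟨⟨hadj, (hP.2 y).mp hy⟩, ?_⟩
        intro hsing
        rw [Set.mem_singleton_iff] at hsing
        exact hcond ((dropUntil_tail_nil_iff hy hadj hP.1 hwnil).mpr hsing)
      · rintro ⟨⟨hadj, hyU⟩, hpen⟩
        rw [Set.mem_singleton_iff] at hpen
        have hy : y ∈ w.support := (hP.2 y).mpr hyU
        exact ⟨hy, hadj, fun hnil =>
          hpen ((dropUntil_tail_nil_iff hy hadj hP.1 hwnil).mp hnil)⟩
    have hpen_mem : penult w ∈ G.neighborSet z ∩ U :=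
      ⟨penult_adj hwnil, (hP.2 _).mp (penult_mem hwnil)⟩
    have hdeg_eq : (XG G a U).degree P = ((XG G a U).neighborSet P).ncard := by
      rw [← card_neighborFinset_eq_degree]
      rw [neighborFinset_def]
      rw [Set.ncard_eq_toFinset_card']
    rw [hdeg_eq, ← himage, Set.ncard_image_of_injOn hinj, hpiv_eq,
      Set.ncard_diff_singleton_of_mem hpen_mem]
    have hpos : 0 < (G.neighborSet z ∩ U).ncard := by
      rw [Set.ncard_pos (Set.toFinite _)]
      exact ⟨_, hpen_mem⟩
    omega
  -- parity characterization
  have hparity : ∀ P : HP G a U, Odd ((XG G a U).degree P) ↔ P.1.1 = b := by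
    intro P
    have hd := hdeg P
    by_cases hzb : P.1.1 = b
    · rw [hzb] at hd
      simp only [hzb, iff_true]
      rcases hbe with ⟨k, hk⟩
      rw [hk] at hd
      exact ⟨k - 1, by omega⟩
    · simp only [hzb, iff_false]
      have ho := hodd P.1.1 (hend_mem P) (hend_ne_a P) hzb
      rcases ho with ⟨k, hk⟩
      rw [hk] at hd
      rintro ⟨m, hm⟩
      omega
  -- handshake
  have hhand := SimpleGraph.even_card_odd_degree_vertices (XG G a U)
  have hfilter : (Finset.univ.filter fun P : HP G a U => Odd ((XG G a U).degree P))
      = Finset.univ.filter fun P : HP G a U => P.1.1 = b := by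
    apply Finset.filter_congr
    intro P _
    simp only [hparity P]
  rw [hfilter] at hhand
  -- transfer the count to walkSet
  have hset : Even ({P : HP G a U | P.1.1 = b}.ncard) := by
    rw [Set.ncard_eq_toFinset_card', Set.toFinset_setOf]
    exact hhand
  have hcongr : Nat.card {P : HP G a U // P.1.1 = b} = Nat.card ↥(walkSet G a b U) := by
    apply Nat.card_congr
    refine ⟨fun P => ⟨P.1.1.2.copy rfl P.2, ?_, ?_⟩,
      fun w => ⟨⟨⟨b, w.1⟩, w.2.1, w.2.2⟩, rfl⟩, ?_, ?_⟩
    · rw [isPath_copy]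
      exact P.1.2.1
    · intro v
      rw [support_copy]
      exact P.1.2.2 v
    · rintro ⟨⟨⟨z, w⟩, hP⟩, hz⟩
      have hz' : z = b := hz
      subst hz'
      apply Subtype.ext
      apply Subtype.ext
      exact congrArg (Sigma.mk z) (Walk.copy_rfl_rfl _)
    · rintro ⟨w, hw⟩
      apply Subtype.ext
      exact Walk.copy_rfl_rfl _
  have hfin : (walkSet G a b U).ncard = {P : HP G a U | P.1.1 = b}.ncard := by
    rw [← Nat.card_coe_set_eq, ← Nat.card_coe_set_eq]
    exact hcongr.symm
  rw [hfin]
  exact hset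

end Thomason

-- ========================= Decomposition =========================

section Decomp

variable {G : SimpleGraph V}

lemma mem_support_of_mem_edges' {u v x : V} {w : G.Walk u v} {e : Sym2 V}
    (he : e ∈ w.edges) (hx : x ∈ e) : x ∈ w.support := by
  induction e using Sym2.ind with
  | _ p q =>
    rw [Sym2.mem_iff] at hx
    rcases hx with rfl | rfl
    · exact w.fst_mem_support_of_mem_edges he
    · exact w.snd_mem_support_of_mem_edges he

lemma edge_eq_sab {a b : V} (hab : a ≠ b) {e : Sym2 V} (he : e ∈ G.edgeSet)
    (hx : ∀ x ∈ e, x = a ∨ x = b) : e = s(a, b) := by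
  induction e using Sym2.ind with
  | _ p q =>
    have hne : p ≠ q := (G.mem_edgeSet.mp he).ne
    rcases hx p (Sym2.mem_mk_left _ _) with rfl | rfl <;>
      rcases hx q (Sym2.mem_mk_right _ _) with rfl | rfl
    · exact absurd rfl hne
    · rfl
    · exact Sym2.eq_swap
    · exact absurd rfl hne

/-- Rotating a hamiltonian cycle yields a hamiltonian cycle. -/
lemma hamCycle_rotate [DecidableEq V] {v u : V} {w : G.Walk v v}
    (hw : w.IsHamiltonianCycle) (hu : u ∈ w.support) : (w.rotate u hu).IsHamiltonianCycle := by
  rw [Walk.isHamiltonianCycle_iff_isCycle_and_support_count_tail_eq_one] at hw ⊢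
  refine ⟨hw.1.rotate hu, fun x => ?_⟩
  rw [(Walk.support_rotate w u hu).perm.count_eq]
  exact hw.2 x

/-- Splitting a hamiltonian cycle at a vertex `b`. -/
lemma cycle_split [DecidableEq V] {a b : V} {c : G.Walk a a} (hc : c.IsHamiltonianCycle)
    (hb : b ∈ c.support) (hba : b ≠ a) :
    (c.takeUntil b hb).IsPath ∧ (c.dropUntil b hb).IsPath ∧
    (∀ x, x ∈ (c.takeUntil b hb).support ∨ x ∈ (c.dropUntil b hb).support) ∧
    (∀ x, x ≠ a → x ≠ b → x ∈ (c.takeUntil b hb).support →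
      x ∉ (c.dropUntil b hb).support) := by
  set T := c.takeUntil b hb with hT
  set D := c.dropUntil b hb with hD
  have hspec : T.append D = c := take_spec c hb
  have hsupp : c.support = T.support ++ D.support.tail := by
    rw [← hspec, support_append]
  have htail : c.support.tail = T.support.tail ++ D.support.tail := by
    have h1 : a :: c.support.tail = (a :: T.support.tail) ++ D.support.tail := by
      rw [← support_eq_cons, ← support_eq_cons, hsupp]
    rw [List.cons_append] at h1
    exact (List.cons.inj h1).2
  have hnd : c.support.tail.Nodup := hc.isCycle.2
  rw [htail, List.nodup_append] at hnd
  obtain ⟨hndT, hndD, hdisj⟩ := hnd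
  have haD : a ∈ D.support.tail := by
    have hmem := D.end_mem_support
    rw [support_eq_cons D, List.mem_cons] at hmem
    rcases hmem with h | h
    · exact absurd h.symm hba
    · exact h
  have haT : a ∉ T.support.tail := fun hmem => hdisj _ hmem _ haD rfl
  have hTpath : T.IsPath := by
    rw [isPath_def, support_eq_cons T]
    exact List.nodup_cons.mpr ⟨haT, hndT⟩
  have hbT : b ∈ T.support.tail := by
    have hmem := T.end_mem_support
    rw [support_eq_cons T, List.mem_cons] at hmem
    rcases hmem with h | h
    · exact absurd h hba
    · exact h
  have hbD : b ∉ D.support.tail := fun hmem => hdisj _ hbT _ hmem rfl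
  have hDpath : D.IsPath := by
    rw [isPath_def, support_eq_cons D]
    exact List.nodup_cons.mpr ⟨hbD, hndD⟩
  refine ⟨hTpath, hDpath, ?_, ?_⟩
  · intro x
    have hx := hc.mem_support x
    rw [hsupp, List.mem_append] at hx
    rcases hx with h | h
    · exact Or.inl h
    · exact Or.inr (List.mem_of_mem_tail h)
  · intro x hxa hxb hxT hxD
    rw [support_eq_cons T, List.mem_cons] at hxT
    rcases hxT with rfl | hxT
    · exact hxa rfl
    rw [support_eq_cons D, List.mem_cons] at hxD
    rcases hxD with rfl | hxD
    · exact hxb rfl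
    exact hdisj _ hxT _ hxD rfl

/-- A path with no crossing edges starting in `A` stays in `A` (except possibly its end). -/
lemma side_confine {A B : Set V} (hcross : ∀ u ∈ A, ∀ v ∈ B, ¬G.Adj u v) :
    ∀ {x y : V} (w : G.Walk x y), w.IsPath →
      (∀ v ∈ w.support, v = y ∨ v ∈ A ∨ v ∈ B) → x ∈ A →
      ∀ v ∈ w.support, v = y ∨ v ∈ A := by
  intro x y w
  induction w with
  | nil =>
    intro _ _ hx v hv
    rw [support_nil, List.mem_singleton] at hv
    subst hv
    exact Or.inr hx
  | @cons x m y hadj w' ih =>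
    intro hp hsupp hx v hv
    rw [support_cons, List.mem_cons] at hv
    rcases hv with rfl | hv
    · exact Or.inr hx
    have hm := hsupp m (by rw [support_cons]; exact List.mem_cons_of_mem _ w'.start_mem_support)
    rw [cons_isPath_iff] at hp
    rcases hm with rfl | hmA | hmB
    · -- m = y, so w' is a loop at y, hence nil
      have := IsPath.eq_nil_of_loop hp.1
      subst this
      rw [support_nil, List.mem_singleton] at hv
      exact Or.inl hv
    · exact ih hp.1 (fun u hu => hsupp u (by rw [support_cons]; exact List.mem_cons_of_mem _ hu))
        hmA v hv
    · exact absurd hadj (hcross x hx m hmB)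

/-- One side of a split path is confined to `A` or to `B`. -/
lemma path_side {a b : V} {A B : Set V} (hab : a ≠ b)
    (hcross : ∀ u ∈ A, ∀ v ∈ B, ¬G.Adj u v)
    (hcover : A ∪ B = ({a, b} : Set V)ᶜ)
    (T : G.Walk a b) (hTp : T.IsPath) :
    (∀ x, x ≠ a → x ≠ b → x ∈ T.support → x ∈ A) ∨
    (∀ x, x ≠ a → x ≠ b → x ∈ T.support → x ∈ B) := by
  obtain ⟨m, hadjm, T', hTeq⟩ := Walk.not_nil_iff.mp (not_nil_of_ne (p := T) hab)
  have hT'p : T'.IsPath := by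
    rw [hTeq, cons_isPath_iff] at hTp
    exact hTp.1
  have haT' : a ∉ T'.support := by
    rw [hTeq, cons_isPath_iff] at hTp
    exact hTp.2
  by_cases hmb : m = b
  · subst hmb
    left
    intro x hxa hxb hxT
    exfalso
    have := IsPath.eq_nil_of_loop hT'p
    rw [hTeq, this] at hxT
    rw [support_cons, support_nil] at hxT
    rcases List.mem_cons.mp hxT with h | h
    · exact hxa h
    · exact hxb (List.mem_singleton.mp h)
  · have hma : m ≠ a := fun h => haT' (h ▸ T'.start_mem_support)
    have hmAB : m ∈ A ∪ B := by
      rw [hcover]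
      simp only [Set.mem_compl_iff, Set.mem_insert_iff, Set.mem_singleton_iff]
      rintro (h | h)
      · exact hma h
      · exact hmb h
    have hsupp' : ∀ v ∈ T'.support, v = b ∨ v ∈ A ∨ v ∈ B := by
      intro v hv
      by_cases hvb : v = b
      · exact Or.inl hvb
      have hva : v ≠ a := fun h => haT' (h ▸ hv)
      right
      have : v ∈ A ∪ B := by
        rw [hcover]
        simp only [Set.mem_compl_iff, Set.mem_insert_iff, Set.mem_singleton_iff]
        rintro (h | h)
        · exact hva h
        · exact hvb h
      exact this
    rcases hmAB with hmA | hmB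
    · left
      intro x hxa hxb hxT
      rw [hTeq, support_cons, List.mem_cons] at hxT
      rcases hxT with rfl | hxT
      · exact absurd rfl hxa
      rcases side_confine hcross T' hT'p hsupp' hmA x hxT with h | h
      · exact absurd h hxb
      · exact h
    · right
      intro x hxa hxb hxT
      rw [hTeq, support_cons, List.mem_cons] at hxT
      rcases hxT with rfl | hxT
      · exact absurd rfl hxa
      have hcross' : ∀ u ∈ B, ∀ v ∈ A, ¬G.Adj u v :=
        fun u hu v hv hadj => hcross v hv u hu hadj.symm
      rcases side_confine hcross' T' hT'p
        (fun v hv => (hsupp' v hv).imp id Or.symm) hmB x hxT with h | h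
      · exact absurd h hxb
      · exact h


lemma cover_facts {a b : V} {A B : Set V} (hcover : A ∪ B = ({a, b} : Set V)ᶜ) :
    (a ∉ A ∧ a ∉ B ∧ b ∉ A ∧ b ∉ B) ∧ (∀ x ∈ A ∪ B, x ≠ a ∧ x ≠ b) ∧
    (∀ x, x ≠ a → x ≠ b → x ∈ A ∨ x ∈ B) := by
  have h1 : ∀ x ∈ A ∪ B, x ≠ a ∧ x ≠ b := by
    intro x hx
    rw [hcover] at hx
    simp only [Set.mem_compl_iff, Set.mem_insert_iff, Set.mem_singleton_iff] at hx
    push_neg at hx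
    exact hx
  refine ⟨⟨fun h => (h1 a (Or.inl h)).1 rfl, fun h => (h1 a (Or.inr h)).1 rfl,
    fun h => (h1 b (Or.inl h)).2 rfl, fun h => (h1 b (Or.inr h)).2 rfl⟩, h1, ?_⟩
  intro x hxa hxb
  have hx : x ∈ A ∪ B := by
    rw [hcover]
    simp only [Set.mem_compl_iff, Set.mem_insert_iff, Set.mem_singleton_iff]
    rintro (h | h)
    · exact hxa h
    · exact hxb h
  exact hx

/-- Membership in `walkSet` from confinement data. -/
lemma mem_walkSet_side {a b : V} (A B : Set V)
    (hdisj : ∀ x, x ∈ A → x ∈ B → False)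
    (hnot : ∀ x ∈ A, x ≠ a ∧ x ≠ b)
    (T other : G.Walk a b) (hTp : T.IsPath)
    (hcov2 : ∀ x, x ∈ T.support ∨ x ∈ other.support)
    (hTA : ∀ x, x ≠ a → x ≠ b → x ∈ T.support → x ∈ A)
    (hOB : ∀ x, x ≠ a → x ≠ b → x ∈ other.support → x ∈ B) :
    T ∈ walkSet G a b (insert a (insert b A)) := by
  refine ⟨hTp, fun x => ⟨?_, ?_⟩⟩
  · intro hx
    by_cases hxa : x = a
    · exact hxa ▸ Set.mem_insert _ _
    by_cases hxb : x = b
    · exact hxb ▸ Set.mem_insert_of_mem _ (Set.mem_insert _ _)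
    exact Set.mem_insert_of_mem _ (Set.mem_insert_of_mem _ (hTA x hxa hxb hx))
  · intro hx
    rcases hx with rfl | rfl | hx
    · exact T.start_mem_support
    · exact T.end_mem_support
    · obtain ⟨hxa, hxb⟩ := hnot x hx
      rcases hcov2 x with h | h
      · exact h
      · exact absurd (hOB x hxa hxb h) (fun hm => hdisj x hx hm)

/-- Gluing two side paths into a hamiltonian cycle. -/
lemma pair_glue [DecidableEq V] {G : SimpleGraph V} (a b : V) (hab : a ≠ b) (A B : Set V)
    (hA : A.Nonempty) (hB : B.Nonempty) (hdisj : Disjoint A B)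
    (hcover : A ∪ B = ({a, b} : Set V)ᶜ)
    (wA : G.Walk a b) (hwA : wA ∈ walkSet G a b (insert a (insert b A)))
    (wB : G.Walk a b) (hwB : wB ∈ walkSet G a b (insert a (insert b B))) :
    (wA.append wB.reverse).IsHamiltonianCycle ∧
      {e | e ∈ (wA.append wB.reverse).edges} = edgesSet wA ∪ edgesSet wB := by
  obtain ⟨⟨haA, haB, hbA, hbB⟩, hABnot, hABmem⟩ := cover_facts hcover
  have hdisj' := Set.disjoint_left.mp hdisj
  obtain ⟨hwAp, hsA⟩ := hwA
  obtain ⟨hwBp, hsB⟩ := hwB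
  obtain ⟨xA, hxA⟩ := hA
  obtain ⟨xB, hxB⟩ := hB
  have hxAa : xA ≠ a := fun h => haA (h ▸ hxA)
  have hxAb : xA ≠ b := fun h => hbA (h ▸ hxA)
  have hxBa : xB ≠ a := fun h => haB (h ▸ hxB)
  have hxBb : xB ≠ b := fun h => hbB (h ▸ hxB)
  have hxAmem : xA ∈ wA.support := (hsA xA).mpr (by right; right; exact hxA)
  have hxBmem : xB ∈ wB.support := (hsB xB).mpr (by right; right; exact hxB)
  have hnoabA : s(a, b) ∉ wA.edges := sab_not_mem_edges wA hwAp hxAmem hxAa hxAb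
  have hnoabB : s(a, b) ∉ wB.edges := sab_not_mem_edges wB hwBp hxBmem hxBa hxBb
  have hmemrev : ∀ x, x ∈ wB.reverse.support ↔ x ∈ wB.support := by
    intro x
    rw [support_reverse, List.mem_reverse]
  have haTA : a ∉ wA.support.tail := by
    have := hwAp.support_nodup
    rw [support_eq_cons] at this
    exact (List.nodup_cons.mp this).1
  have hbT' : b ∉ wB.reverse.support.tail := by
    have := hwBp.reverse.support_nodup
    rw [support_eq_cons] at this
    exact (List.nodup_cons.mp this).1
  have hndtA : wA.support.tail.Nodup := by
    have := hwAp.support_nodup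
    rw [support_eq_cons] at this
    exact (List.nodup_cons.mp this).2
  have hndt' : wB.reverse.support.tail.Nodup := by
    have := hwBp.reverse.support_nodup
    rw [support_eq_cons] at this
    exact (List.nodup_cons.mp this).2
  have htA : ∀ x ∈ wA.support.tail, (x = b ∨ x ∈ A) ∧ x ≠ a := by
    intro x hx
    have hxa : x ≠ a := fun h => haTA (h ▸ hx)
    have hxU := (hsA x).mp (List.mem_of_mem_tail hx)
    rcases hxU with rfl | rfl | hxU
    · exact absurd rfl hxa
    · exact ⟨Or.inl rfl, hxa⟩
    · exact ⟨Or.inr hxU, hxa⟩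
  have ht' : ∀ x ∈ wB.reverse.support.tail, (x = a ∨ x ∈ B) ∧ x ≠ b := by
    intro x hx
    have hxb : x ≠ b := fun h => hbT' (h ▸ hx)
    have hxU := (hsB x).mp ((hmemrev x).mp (List.mem_of_mem_tail hx))
    rcases hxU with rfl | rfl | hxU
    · exact ⟨Or.inl rfl, hxb⟩
    · exact absurd rfl hxb
    · exact ⟨Or.inr hxU, hxb⟩
  have hdisjt : List.Disjoint wA.support.tail wB.reverse.support.tail := by
    intro x hx1 hx2
    obtain ⟨h1, hxa⟩ := htA x hx1
    obtain ⟨h2, hxb⟩ := ht' x hx2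
    rcases h1 with rfl | h1
    · exact hxb rfl
    rcases h2 with rfl | h2
    · exact hxa rfl
    exact hdisj' h1 h2
  have htail : (wA.append wB.reverse).support.tail
      = wA.support.tail ++ wB.reverse.support.tail := by
    rw [support_append, support_eq_cons wA]
    rfl
  have hndtail : (wA.append wB.reverse).support.tail.Nodup := by
    rw [htail]
    exact List.Nodup.append hndtA hndt' hdisjt
  have hedgesc : (wA.append wB.reverse).edges = wA.edges ++ wB.reverse.edges := edges_append _ _
  have hedisj : List.Disjoint wA.edges wB.reverse.edges := by
    intro e heA heB'
    have heB : e ∈ wB.edges := by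
      rwa [edges_reverse, List.mem_reverse] at heB'
    have hxab : ∀ x ∈ e, x = a ∨ x = b := by
      intro x hx
      have h1 := (hsA x).mp (mem_support_of_mem_edges' heA hx)
      have h2 := (hsB x).mp (mem_support_of_mem_edges' heB hx)
      rcases h1 with rfl | rfl | h1
      · exact Or.inl rfl
      · exact Or.inr rfl
      rcases h2 with rfl | rfl | h2
      · exact Or.inl rfl
      · exact Or.inr rfl
      · exact absurd h2 (fun hm => hdisj' h1 hm)
    exact hnoabA (edge_eq_sab hab (wA.edges_subset_edgeSet heA) hxab ▸ heA)
  have hndedges : (wA.append wB.reverse).edges.Nodup := by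
    rw [hedgesc]
    refine List.Nodup.append hwAp.edges_nodup ?_ hedisj
    rw [edges_reverse]
    exact List.nodup_reverse.mpr hwBp.edges_nodup
  have hnenil : wA.append wB.reverse ≠ Walk.nil := by
    intro hnil
    have := congrArg Walk.length hnil
    rw [length_append] at this
    have hlenA : 0 < wA.length := not_nil_iff_lt_length.mp (not_nil_of_ne hab)
    simp only [length_nil, length_reverse] at this
    omega
  have hcyc : (wA.append wB.reverse).IsCycle := ⟨⟨⟨hndedges⟩, hnenil⟩, hndtail⟩
  constructor
  · rw [Walk.isHamiltonianCycle_iff_isCycle_and_support_count_tail_eq_one]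
    refine ⟨hcyc, fun x => ?_⟩
    rw [htail]
    apply List.count_eq_one_of_mem (List.Nodup.append hndtA hndt' hdisjt)
    by_cases hxa : x = a
    · subst hxa
      apply List.mem_append_right
      have hmem : x ∈ wB.reverse.support := wB.reverse.end_mem_support
      rw [support_eq_cons, List.mem_cons] at hmem
      rcases hmem with h | h
      · exact absurd h hab
      · exact h
    by_cases hxb : x = b
    · subst hxb
      apply List.mem_append_left
      have hmem : x ∈ wA.support := wA.end_mem_support
      rw [support_eq_cons, List.mem_cons] at hmem
      rcases hmem with h | h
      · exact absurd h hxa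
      · exact h
    rcases hABmem x hxa hxb with hxA' | hxB'
    · apply List.mem_append_left
      have hmem : x ∈ wA.support := (hsA x).mpr (by right; right; exact hxA')
      rw [support_eq_cons, List.mem_cons] at hmem
      rcases hmem with h | h
      · exact absurd h hxa
      · exact h
    · apply List.mem_append_right
      have hmem : x ∈ wB.reverse.support :=
        (hmemrev x).mpr ((hsB x).mpr (by right; right; exact hxB'))
      rw [support_eq_cons, List.mem_cons] at hmem
      rcases hmem with h | h
      · exact absurd h hxb
      · exact h
  · ext e
    simp only [Set.mem_setOf_eq, Set.mem_union, edgesSet]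
    rw [hedgesc, List.mem_append, edges_reverse, List.mem_reverse]

lemma hamCycleSets_eq {G : SimpleGraph V} [inst : DecidableEq V] :
    hamCycleSets G = {s | ∃ (v : V) (w : G.Walk v v),
      w.IsHamiltonianCycle ∧ {e | e ∈ w.edges} = s} := by
  unfold hamCycleSets
  rw [Subsingleton.elim (Classical.decEq V) inst]

lemma decomp [DecidableEq V] (G : SimpleGraph V) (a b : V) (hab : a ≠ b) (A B : Set V)
    (hA : A.Nonempty) (hB : B.Nonempty) (hdisj : Disjoint A B)
    (hcover : A ∪ B = ({a, b} : Set V)ᶜ)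
    (hcross : ∀ u ∈ A, ∀ v ∈ B, ¬G.Adj u v) :
    hamCycleSets G = (fun pr : Set (Sym2 V) × Set (Sym2 V) => pr.1 ∪ pr.2) ''
      ((edgesSet '' walkSet G a b (insert a (insert b A))) ×ˢ
        (edgesSet '' walkSet G a b (insert a (insert b B)))) := by
  rw [hamCycleSets_eq]
  obtain ⟨⟨haA, haB, hbA, hbB⟩, hABnot, hABmem⟩ := cover_facts hcover
  have hdisj' := Set.disjoint_left.mp hdisj
  ext s
  constructor
  · rintro ⟨v, w, hw, rfl⟩
    have hav : a ∈ w.support := hw.mem_support a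
    have hcham := hamCycle_rotate hw hav
    have hedges : ∀ e, e ∈ (w.rotate a hav).edges ↔ e ∈ w.edges :=
      fun e => (rotate_edges w a hav).perm.mem_iff
    have hbc : b ∈ (w.rotate a hav).support := hcham.mem_support b
    obtain ⟨hTp, hDp, hcov2, hint⟩ := cycle_split hcham hbc (Ne.symm hab)
    have hce : (w.rotate a hav).edges = ((w.rotate a hav).takeUntil b hbc).edges
        ++ ((w.rotate a hav).dropUntil b hbc).edges := by
      rw [← edges_append, take_spec]
    have hDrev_mem : ∀ x, x ∈ ((w.rotate a hav).dropUntil b hbc).reverse.support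
        ↔ x ∈ ((w.rotate a hav).dropUntil b hbc).support := by
      intro x
      rw [support_reverse, List.mem_reverse]
    have hcov2' : ∀ x, x ∈ ((w.rotate a hav).takeUntil b hbc).support
        ∨ x ∈ ((w.rotate a hav).dropUntil b hbc).reverse.support := by
      intro x
      rcases hcov2 x with h | h
      · exact Or.inl h
      · exact Or.inr ((hDrev_mem x).mpr h)
    have hTside := path_side hab hcross hcover _ hTp
    have hDside := path_side hab hcross hcover
      ((w.rotate a hav).dropUntil b hbc).reverse hDp.reverse
    have hedge_union : ∀ (w1 w2 : G.Walk a b),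
        (∀ e, (e ∈ w1.edges ∨ e ∈ w2.edges) ↔ e ∈ w.edges) →
        edgesSet w1 ∪ edgesSet w2 = {e | e ∈ w.edges} := by
      intro w1 w2 hiff
      ext e
      simp only [edgesSet, Set.mem_union, Set.mem_setOf_eq]
      exact hiff e
    rcases hTside with hTA | hTB <;> rcases hDside with hDA | hDB
    · exfalso
      obtain ⟨z, hz⟩ := hB
      obtain ⟨hza, hzb⟩ := hABnot z (Or.inr hz)
      rcases hcov2 z with hzT | hzD
      · exact hdisj' (hTA z hza hzb hzT) hz
      · exact hdisj' (hDA z hza hzb ((hDrev_mem z).mpr hzD)) hz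
    · refine ⟨(edgesSet ((w.rotate a hav).takeUntil b hbc),
        edgesSet ((w.rotate a hav).dropUntil b hbc).reverse),
        ⟨⟨_, mem_walkSet_side A B (fun x h1 h2 => hdisj' h1 h2)
          (fun x hx => hABnot x (Or.inl hx)) _ _ hTp hcov2' hTA hDB, rfl⟩,
        ⟨_, mem_walkSet_side B A (fun x h1 h2 => hdisj' h2 h1)
          (fun x hx => hABnot x (Or.inr hx)) _ _ hDp.reverse
          (fun x => (hcov2' x).symm) hDB hTA, rfl⟩⟩, ?_⟩
      apply hedge_union
      intro e
      rw [edges_reverse, List.mem_reverse, ← hedges e, hce, List.mem_append]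
    · refine ⟨(edgesSet ((w.rotate a hav).dropUntil b hbc).reverse,
        edgesSet ((w.rotate a hav).takeUntil b hbc)),
        ⟨⟨_, mem_walkSet_side A B (fun x h1 h2 => hdisj' h1 h2)
          (fun x hx => hABnot x (Or.inl hx)) _ _ hDp.reverse
          (fun x => (hcov2' x).symm) hDA hTB, rfl⟩,
        ⟨_, mem_walkSet_side B A (fun x h1 h2 => hdisj' h2 h1)
          (fun x hx => hABnot x (Or.inr hx)) _ _ hTp hcov2' hTB hDA, rfl⟩⟩, ?_⟩
      apply hedge_union
      intro e
      rw [edges_reverse, List.mem_reverse, or_comm, ← hedges e, hce, List.mem_append]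
    · exfalso
      obtain ⟨z, hz⟩ := hA
      obtain ⟨hza, hzb⟩ := hABnot z (Or.inl hz)
      rcases hcov2 z with hzT | hzD
      · exact hdisj' hz (hTB z hza hzb hzT)
      · exact hdisj' hz (hDB z hza hzb ((hDrev_mem z).mpr hzD))
  · rintro ⟨⟨s1, s2⟩, ⟨⟨wA, hwA, rfl⟩, ⟨wB, hwB, rfl⟩⟩, rfl⟩
    obtain ⟨hham, hedges⟩ := pair_glue a b hab A B hA hB hdisj hcover wA hwA wB hwB
    exact ⟨a, wA.append wB.reverse, hham, hedges⟩

lemma union_injOn (G : SimpleGraph V) (a b : V) (hab : a ≠ b) (A B : Set V)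
    (hA : A.Nonempty) (hB : B.Nonempty) (hdisj : Disjoint A B)
    (hcover : A ∪ B = ({a, b} : Set V)ᶜ) :
    Set.InjOn (fun pr : Set (Sym2 V) × Set (Sym2 V) => pr.1 ∪ pr.2)
      ((edgesSet '' walkSet G a b (insert a (insert b A))) ×ˢ
        (edgesSet '' walkSet G a b (insert a (insert b B)))) := by
  obtain ⟨⟨haA, haB, hbA, hbB⟩, hABnot, hABmem⟩ := cover_facts hcover
  have hdisj' := Set.disjoint_left.mp hdisj
  set EA : Set (Sym2 V) := {e | ∀ x ∈ e, x ∈ insert a (insert b A)} with hEA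
  have hsub : ∀ s1 ∈ edgesSet '' walkSet G a b (insert a (insert b A)), s1 ⊆ EA := by
    rintro s1 ⟨wA, hwA, rfl⟩ e he
    intro x hx
    exact (hwA.2 x).mp (mem_support_of_mem_edges' he hx)
  have hdisjE : ∀ s2 ∈ edgesSet '' walkSet G a b (insert a (insert b B)),
      ∀ e ∈ s2, e ∉ EA := by
    rintro s2 ⟨wB, hwB, rfl⟩ e he heEA
    obtain ⟨xB, hxB⟩ := hB
    have hxBa : xB ≠ a := fun h => haB (h ▸ hxB)
    have hxBb : xB ≠ b := fun h => hbB (h ▸ hxB)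
    have hnoabB : s(a, b) ∉ wB.edges :=
      sab_not_mem_edges wB hwB.1 ((hwB.2 xB).mpr (by right; right; exact hxB)) hxBa hxBb
    have hxab : ∀ x ∈ e, x = a ∨ x = b := by
      intro x hx
      have h1 := heEA x hx
      have h2 := (hwB.2 x).mp (mem_support_of_mem_edges' he hx)
      rcases h1 with rfl | rfl | h1
      · exact Or.inl rfl
      · exact Or.inr rfl
      rcases h2 with rfl | rfl | h2
      · exact Or.inl rfl
      · exact Or.inr rfl
      · exact absurd h2 (fun hm => hdisj' h1 hm)
    exact hnoabB (edge_eq_sab hab (wB.edges_subset_edgeSet he) hxab ▸ he)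
  have hrec : ∀ s1 ∈ edgesSet '' walkSet G a b (insert a (insert b A)),
      ∀ s2 ∈ edgesSet '' walkSet G a b (insert a (insert b B)),
      (s1 ∪ s2) ∩ EA = s1 := by
    intro s1 hs1 s2 hs2
    ext e
    constructor
    · rintro ⟨he1 | he2, heEA⟩
      · exact he1
      · exact absurd heEA (hdisjE s2 hs2 e he2)
    · intro he
      exact ⟨Or.inl he, hsub s1 hs1 he⟩
  rintro ⟨s1, s2⟩ hs ⟨t1, t2⟩ ht heq
  simp only [Set.mem_prod] at hs ht
  simp only at heq
  have h1 : s1 = t1 := by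
    rw [← hrec s1 hs.1 s2 hs.2, ← hrec t1 ht.1 t2 ht.2, heq]
  have h2 : s2 = t2 := by
    ext e
    constructor
    · intro he
      have : e ∈ t1 ∪ t2 := by rw [← heq]; exact Or.inr he
      rcases this with h | h
      · exact absurd (hsub t1 ht.1 (h1 ▸ h)) (hdisjE s2 hs.2 e he)
      · exact h
    · intro he
      have : e ∈ s1 ∪ s2 := by rw [heq]; exact Or.inr he
      rcases this with h | h
      · exact absurd (hsub s1 hs.1 h) (hdisjE t2 ht.2 e he)
      · exact h
  rw [Prod.mk.injEq]
  exact ⟨h1, h2⟩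


lemma edgesSet_injOn (G : SimpleGraph V) (a b : V) (U : Set V) :
    Set.InjOn (fun w : G.Walk a b => edgesSet w) (walkSet G a b U) := by
  intro w1 h1 w2 h2 heq
  apply path_eq_of_edges w1 w2 h1.1 h2.1
  intro e
  exact Set.ext_iff.mp heq e

lemma even_side [Fintype V] [DecidableEq V] (G : SimpleGraph V) (a b : V) (hab : a ≠ b)
    (A B : Set V) (hA : A.Nonempty) (hcover : A ∪ B = ({a, b} : Set V)ᶜ)
    (hcross : ∀ u ∈ A, ∀ v ∈ B, ¬G.Adj u v)
    (hodd : ∀ v, Odd ((G.neighborSet v).ncard)) :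
    Even (walkSet G a b (insert a (insert b A))).ncard := by
  obtain ⟨⟨haA, haB, hbA, hbB⟩, hABnot, hABmem⟩ := cover_facts hcover
  obtain ⟨xA, hxA⟩ := hA
  have haU : a ∈ insert a (insert b A) := Set.mem_insert _ _
  have hbU : b ∈ insert a (insert b A) := Set.mem_insert_of_mem _ (Set.mem_insert _ _)
  have hxU : xA ∈ insert a (insert b A) :=
    Set.mem_insert_of_mem _ (Set.mem_insert_of_mem _ hxA)
  have hxa : xA ≠ a := fun h => haA (h ▸ hxA)
  have hxb : xA ≠ b := fun h => hbA (h ▸ hxA)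
  have hNsub : ∀ v ∈ insert a (insert b A), v ≠ a → v ≠ b →
      G.neighborSet v ⊆ insert a (insert b A) := by
    intro v hvU hva hvb u hu
    have hvA : v ∈ A := by
      rcases hvU with rfl | rfl | h
      · exact absurd rfl hva
      · exact absurd rfl hvb
      · exact h
    by_cases hua : u = a
    · exact hua ▸ Set.mem_insert _ _
    by_cases hub : u = b
    · exact hub ▸ Set.mem_insert_of_mem _ (Set.mem_insert _ _)
    rcases hABmem u hua hub with h | h
    · exact Set.mem_insert_of_mem _ (Set.mem_insert_of_mem _ h)
    · exact absurd hu (hcross v hvA u h)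
  by_cases hbe : Even ((G.neighborSet b ∩ insert a (insert b A)).ncard)
  · apply thomason G a b hab _ haU hbU ?_ hbe
    intro v hv hva hvb
    rw [Set.inter_eq_left.mpr (hNsub v hv hva hvb)]
    exact hodd v
  · have hbe' : Even (((toggle G a b).neighborSet b ∩ insert a (insert b A)).ncard) :=
      toggle_parity hab _ haU (Nat.not_even_iff_odd.mp hbe)
    rw [ncard_walkSet_congr G (toggle G a b) a b _ ⟨xA, hxU, hxa, hxb⟩
      (fun x y hxy => (toggle_adj_of_ne hxy).symm)]
    apply thomason (toggle G a b) a b hab _ haU hbU ?_ hbe'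
    intro v hv hva hvb
    rw [toggle_neighborSet_of_ne hva hvb, Set.inter_eq_left.mpr (hNsub v hv hva hvb)]
    exact hodd v

/-- The contradiction from a `2`-cut. -/
lemma main2 [Fintype V] [DecidableEq V] (G : SimpleGraph V) (p : ℕ) (hp : p.Prime)
    (hodd : ∀ v, Odd ((G.neighborSet v).ncard)) (hcount : (hamCycleSets G).ncard = p)
    (a b : V) (hab : a ≠ b) (A B : Set V) (hA : A.Nonempty) (hB : B.Nonempty)
    (hdisj : Disjoint A B) (hcover : A ∪ B = ({a, b} : Set V)ᶜ)
    (hcross : ∀ u ∈ A, ∀ v ∈ B, ¬G.Adj u v) : False := by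
  have hdec := decomp G a b hab A B hA hB hdisj hcover hcross
  have hinj := union_injOn G a b hab A B hA hB hdisj hcover
  have hprod : (hamCycleSets G).ncard =
      (edgesSet '' walkSet G a b (insert a (insert b A))).ncard *
      (edgesSet '' walkSet G a b (insert a (insert b B))).ncard := by
    rw [hdec, Set.ncard_image_of_injOn hinj]
    rw [← Nat.card_coe_set_eq, Nat.card_congr (Equiv.Set.prod _ _), Nat.card_prod,
      Nat.card_coe_set_eq, Nat.card_coe_set_eq]
  have hqa : (edgesSet '' walkSet G a b (insert a (insert b A))).ncard
      = (walkSet G a b (insert a (insert b A))).ncard :=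
    Set.ncard_image_of_injOn (edgesSet_injOn G a b _)
  have hqb : (edgesSet '' walkSet G a b (insert a (insert b B))).ncard
      = (walkSet G a b (insert a (insert b B))).ncard :=
    Set.ncard_image_of_injOn (edgesSet_injOn G a b _)
  have hevenA : Even ((edgesSet '' walkSet G a b (insert a (insert b A))).ncard) := by
    rw [hqa]
    exact even_side G a b hab A B hA hcover hcross hodd
  have hevenB : Even ((edgesSet '' walkSet G a b (insert a (insert b B))).ncard) := by
    rw [hqb]
    apply even_side G a b hab B A hB ?_ ?_ hodd
    · rw [Set.union_comm]; exact hcover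
    · exact fun u hu v hv hadj => hcross v hv u hu hadj.symm
  rw [hcount] at hprod
  have hdvd : (edgesSet '' walkSet G a b (insert a (insert b A))).ncard ∣ p :=
    Dvd.intro _ hprod.symm
  rcases hp.eq_one_or_self_of_dvd _ hdvd with h1 | h1
  · rw [h1] at hevenA
    simp at hevenA
  · rw [h1] at hprod
    have hp0 : 0 < p := hp.pos
    have h2 : 2 ≤ (edgesSet '' walkSet G a b (insert a (insert b B))).ncard := by
      rcases hevenB with ⟨k, hk⟩
      rcases Nat.eq_zero_or_pos k with rfl | hk1
      · rw [hk] at hprod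
        simp at hprod
        omega
      · omega
    have hle : p * 2 ≤ p * (edgesSet '' walkSet G a b (insert a (insert b B))).ncard :=
      Nat.mul_le_mul_left p h2
    rw [← hprod] at hle
    omega

/-- Padding a small cut to a cut of size exactly two. -/
lemma pad_step [Fintype V] (G : SimpleGraph V) (S : Set V) (hV : 4 ≤ Fintype.card V)
    (hS : S.ncard ≤ 1) (A B : Set V) (hA : A.Nonempty) (hB : B.Nonempty)
    (hdisj : Disjoint A B) (hcover : A ∪ B = Sᶜ)
    (hcross : ∀ u ∈ A, ∀ v ∈ B, ¬G.Adj u v) :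
    ∃ (S' A' B' : Set V), S'.ncard = S.ncard + 1 ∧ A'.Nonempty ∧ B'.Nonempty ∧
      Disjoint A' B' ∧ A' ∪ B' = S'ᶜ ∧ ∀ u ∈ A', ∀ v ∈ B', ¬G.Adj u v := by
  have hsum : A.ncard + B.ncard = (Sᶜ : Set V).ncard := by
    rw [← Set.ncard_union_eq hdisj (Set.toFinite _) (Set.toFinite _), hcover]
  have hcompl : S.ncard + (Sᶜ : Set V).ncard = Fintype.card V := by
    rw [← Nat.card_eq_fintype_card]
    exact Set.ncard_add_ncard_compl S (Set.toFinite _) (Set.toFinite _)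
  have hbig : 2 ≤ A.ncard ∨ 2 ≤ B.ncard := by
    by_contra hcon
    push_neg at hcon
    omega
  -- a helper performing the trim on the first side
  have htrim : ∀ (A B : Set V), 2 ≤ A.ncard → B.Nonempty → Disjoint A B → A ∪ B = Sᶜ →
      (∀ u ∈ A, ∀ v ∈ B, ¬G.Adj u v) →
      ∃ (S' A' B' : Set V), S'.ncard = S.ncard + 1 ∧ A'.Nonempty ∧ B'.Nonempty ∧
        Disjoint A' B' ∧ A' ∪ B' = S'ᶜ ∧ ∀ u ∈ A', ∀ v ∈ B', ¬G.Adj u v := by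
    clear hbig hsum hdisj hcover hcross hA hB A B
    intro A B hA2 hB hdisj hcover hcross
    have hAne : A.Nonempty := by
      rw [← Set.ncard_pos (Set.toFinite _)]
      omega
    obtain ⟨c, hc⟩ := hAne
    have hcS : c ∉ S := by
      intro hcs
      have : c ∈ Sᶜ := hcover ▸ Or.inl hc
      exact this hcs
    refine ⟨insert c S, A \ {c}, B, ?_, ?_, hB, ?_, ?_, ?_⟩
    · rw [Set.ncard_insert_of_notMem hcS]
    · rw [← Set.ncard_pos (Set.toFinite _),
        Set.ncard_diff_singleton_of_mem hc]
      omega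
    · exact Disjoint.mono_left Set.diff_subset hdisj
    · ext x
      simp only [Set.mem_union, Set.mem_diff, Set.mem_singleton_iff, Set.mem_compl_iff,
        Set.mem_insert_iff]
      constructor
      · rintro (⟨hxA, hxc⟩ | hxB)
        · push_neg
          refine ⟨hxc, ?_⟩
          have : x ∈ Sᶜ := hcover ▸ Or.inl hxA
          exact this
        · push_neg
          constructor
          · rintro rfl
            exact Set.disjoint_left.mp hdisj hc hxB
          · have : x ∈ Sᶜ := hcover ▸ Or.inr hxB
            exact this
      · intro hx
        push_neg at hx
        have hxS : x ∈ Sᶜ := hx.2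
        have : x ∈ A ∪ B := hcover ▸ hxS
        rcases this with h | h
        · exact Or.inl ⟨h, hx.1⟩
        · exact Or.inr h
    · exact fun u hu v hv => hcross u hu.1 v hv
  rcases hbig with h2 | h2
  · exact htrim A B h2 hB hdisj hcover hcross
  · obtain ⟨S', A', B', h1, h2', h3, h4, h5, h6⟩ := htrim B A h2 hA hdisj.symm
      (by rw [Set.union_comm]; exact hcover)
      (fun u hu v hv hadj => hcross v hv u hu hadj.symm)
    exact ⟨S', B', A', h1, h3, h2', h4.symm, by rw [Set.union_comm]; exact h5,
      fun u hu v hv hadj => h6 v hv u hu hadj.symm⟩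

end Decomp

end HamAux

theorem stmt4 {V : Type*} [Fintype V] (G : SimpleGraph V) (p : ℕ) (hp : p.Prime)
    (hodd : ∀ v, Odd (vdeg G v)) (h : hamCount G = p) :
    ThreeConnected G := by
  classical
  have hodd' : ∀ v, Odd ((G.neighborSet v).ncard) := hodd
  have hcount : (hamCycleSets G).ncard = p := h
  -- a hamiltonian cycle exists
  have hne : (hamCycleSets G).Nonempty := by
    apply Set.nonempty_of_ncard_ne_zero
    rw [hcount]
    exact hp.ne_zero
  obtain ⟨s0, hs0⟩ := hne
  rw [HamAux.hamCycleSets_eq] at hs0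
  obtain ⟨v0, w0, hw0, _⟩ := hs0
  -- card ≥ 3
  have hcard3 : 3 ≤ Fintype.card V := by
    have h1 := hw0.length_eq
    have h2 := hw0.isCycle.three_le_length
    omega
  -- degrees
  have hdeg_eq : ∀ v, (G.neighborSet v).ncard = G.degree v := fun v => by
    rw [← card_neighborFinset_eq_degree, neighborFinset_def, Set.ncard_eq_toFinset_card']
  -- card V is even
  have hcardeven : Even (Fintype.card V) := by
    have hhand := SimpleGraph.even_card_odd_degree_vertices G
    have hfil : (Finset.univ.filter fun v => Odd (G.degree v)) = Finset.univ := by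
      apply Finset.filter_true_of_mem
      intro v _
      rw [← hdeg_eq v]
      exact hodd' v
    rw [hfil, Finset.card_univ] at hhand
    exact hhand
  have hcard4 : 4 ≤ Fintype.card V := by
    rcases hcardeven with ⟨k, hk⟩
    omega
  refine ⟨hcard4, ?_⟩
  intro S hS
  by_contra hnc
  -- the complement is nonempty
  have hcompl : S.ncard + (Sᶜ : Set V).ncard = Fintype.card V := by
    rw [← Nat.card_eq_fintype_card]
    exact Set.ncard_add_ncard_compl S (Set.toFinite _) (Set.toFinite _)
  have hSc_ne : (Sᶜ : Set V).Nonempty := by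
    rw [← Set.ncard_pos (Set.toFinite _)]
    omega
  have hnonempty : Nonempty ↥(Sᶜ : Set V) := hSc_ne.to_subtype
  have hpre : ¬(G.induce (Sᶜ : Set V)).Preconnected := fun hpre => hnc (by haveI := hnonempty; exact ⟨hpre⟩)
  rw [SimpleGraph.Preconnected] at hpre
  push_neg at hpre
  obtain ⟨x, y, hxy⟩ := hpre
  -- build the two sides
  set A : Set V := {v | ∃ hv : v ∈ (Sᶜ : Set V), (G.induce (Sᶜ : Set V)).Reachable x ⟨v, hv⟩}
    with hAdef
  set B : Set V := (Sᶜ : Set V) \ A with hBdef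
  have hAsub : A ⊆ (Sᶜ : Set V) := fun v hv => hv.1
  have hxA : (x : V) ∈ A := ⟨x.2, by exact Reachable.refl _⟩
  have hyB : (y : V) ∈ B := by
    refine ⟨y.2, ?_⟩
    rintro ⟨hv, hr⟩
    exact hxy hr
  have hdisj : Disjoint A B := Set.disjoint_sdiff_right
  have hcover : A ∪ B = (Sᶜ : Set V) := Set.union_diff_cancel hAsub
  have hcross : ∀ u ∈ A, ∀ v ∈ B, ¬G.Adj u v := by
    rintro u ⟨huS, hur⟩ v hv hadj
    apply hv.2
    refine ⟨hv.1, ?_⟩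
    refine hur.trans (Adj.reachable ?_)
    exact hadj
  -- pad the cut to size exactly 2
  have hpad : ∃ (S' A' B' : Set V), S'.ncard = 2 ∧ A'.Nonempty ∧ B'.Nonempty ∧
      Disjoint A' B' ∧ A' ∪ B' = S'ᶜ ∧ ∀ u ∈ A', ∀ v ∈ B', ¬G.Adj u v := by
    have hAne : A.Nonempty := ⟨x, hxA⟩
    have hBne : B.Nonempty := ⟨y, hyB⟩
    rcases Nat.lt_or_ge S.ncard 2 with hlt | hge
    · rcases Nat.lt_or_ge S.ncard 1 with hlt0 | hge1
      · -- ncard S = 0, pad twice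
        obtain ⟨S1, A1, B1, hc1, hA1, hB1, hd1, hcov1, hcr1⟩ :=
          HamAux.pad_step G S hcard4 (by omega) A B hAne hBne hdisj hcover hcross
        obtain ⟨S2, A2, B2, hc2, hA2, hB2, hd2, hcov2, hcr2⟩ :=
          HamAux.pad_step G S1 hcard4 (by omega) A1 B1 hA1 hB1 hd1 hcov1 hcr1
        exact ⟨S2, A2, B2, by omega, hA2, hB2, hd2, hcov2, hcr2⟩
      · -- ncard S = 1, pad once
        obtain ⟨S1, A1, B1, hc1, hA1, hB1, hd1, hcov1, hcr1⟩ :=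
          HamAux.pad_step G S hcard4 (by omega) A B hAne hBne hdisj hcover hcross
        exact ⟨S1, A1, B1, by omega, hA1, hB1, hd1, hcov1, hcr1⟩
    · exact ⟨S, A, B, by omega, hAne, hBne, hdisj, hcover, hcross⟩
  obtain ⟨S', A', B', hc2, hA', hB', hd', hcov', hcr'⟩ := hpad
  obtain ⟨a, b, hab, rfl⟩ := Set.ncard_eq_two.mp hc2
  exact HamAux.main2 G p hp hodd' hcount a b hab A' B' hA' hB' hd' hcov' hcr'
end

section
/- Let G be a uniquely traceable graph of order n ≥ 2 whose unique hamiltonian path is v1 v2 … vn. Then v1 and vn both have degree 1 in G and every other vertex of G has degree at least 2; in particular, G has exactly two vertices of degree 1 and G is connected but not 2-connected. -/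
open SimpleGraph

/-- A graph is `2`-connected if it has at least `3` vertices and remains connected after
the deletion of any single vertex. -/
def TwoConnected {V : Type*} [Fintype V] (G : SimpleGraph V) : Prop :=
  3 ≤ Fintype.card V ∧ ∀ x : V, (G.induce ({x}ᶜ : Set V)).Connected

section Aux

variable {V : Type*} {G : SimpleGraph V}

/-- In a path starting at `u` with first step to `b`, any edge at `u` goes to `b`. -/
lemma aux_snd_eq {u v b x : V} (h : G.Adj u b) (p : G.Walk b v)
    (hp : (Walk.cons h p).IsPath) (he : s(u, x) ∈ (Walk.cons h p).edges) : x = b := by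
  rw [Walk.edges_cons, List.mem_cons] at he
  rcases he with he | he
  · exact Sym2.congr_right.mp he
  · exact absurd (Walk.fst_mem_support_of_mem_edges p he)
      ((Walk.cons_isPath_iff h p).mp hp).2

lemma aux_isHamiltonian_congr (i1 i2 : DecidableEq V) {a b : V}
    {w : G.Walk a b} (h : @Walk.IsHamiltonian V i1 G a b w) :
    @Walk.IsHamiltonian V i2 G a b w := by
  rwa [Subsingleton.elim i2 i1]

/-- Unique traceability: any two hamiltonian paths have the same edge set. -/
lemma aux_uniq [DecidableEq V] (hut : hamPathCount G = 1) {a b c d : V}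
    (w1 : G.Walk a b) (w2 : G.Walk c d) (h1 : w1.IsHamiltonian) (h2 : w2.IsHamiltonian) :
    {e | e ∈ w1.edges} = {e | e ∈ w2.edges} := by
  obtain ⟨s, hs⟩ := Set.ncard_eq_one.mp hut
  have m1 : {e | e ∈ w1.edges} ∈ hamPathSets G := ⟨a, b, w1, aux_isHamiltonian_congr _ _ h1, rfl⟩
  have m2 : {e | e ∈ w2.edges} ∈ hamPathSets G := ⟨c, d, w2, aux_isHamiltonian_congr _ _ h2, rfl⟩
  rw [hs, Set.mem_singleton_iff] at m1 m2
  rw [m1, m2]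

lemma aux_rev [DecidableEq V] {a b : V} {w : G.Walk a b} (h : w.IsHamiltonian) :
    w.reverse.IsHamiltonian := by
  intro x
  rw [Walk.support_reverse, List.count_reverse]
  exact h x

variable [Fintype V] [DecidableEq V]

lemma aux_not_nil {a b : V} (hn : 2 ≤ Fintype.card V) {w : G.Walk a b}
    (hw : w.IsHamiltonian) : ¬ w.Nil := by
  rw [Walk.nil_iff_length_eq, hw.length_eq]
  omega

lemma aux_deg_start (hn : 2 ≤ Fintype.card V) (hut : hamPathCount G = 1)
    {u v : V} (w : G.Walk u v) (hw : w.IsHamiltonian) : vdeg G u = 1 := by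
  classical
  have hpath : w.IsPath := Walk.IsPath.mk'
    (List.nodup_iff_count_le_one.mpr fun a => (hw a).le)
  obtain ⟨b, hb, p, rfl⟩ := Walk.not_nil_iff.mp (aux_not_nil hn hw)
  have hset : G.neighborSet u = {b} := by
    ext x
    simp only [mem_neighborSet, Set.mem_singleton_iff]
    constructor
    · intro hadj
      by_contra hxb
      -- x is in the support of w
      have hxu : x ≠ u := hadj.ne'
      have hxmem : x ∈ (Walk.cons hb p).support := hw.mem_support x
      set w : G.Walk u v := Walk.cons hb p with hwdef
      -- split w at x
      have hP := w.take_spec hxmem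
      set P : G.Walk u x := w.takeUntil x hxmem with hPdef
      set Q : G.Walk x v := w.dropUntil x hxmem with hQdef
      have hPnil : ¬ P.Nil := Walk.not_nil_of_ne (Ne.symm hxu)
      have hPrnil : ¬ P.reverse.Nil := Walk.not_nil_of_ne hxu
      obtain ⟨z, hz, r, hr⟩ := Walk.not_nil_iff.mp hPrnil
      -- the rotated walk
      set n : G.Walk z v := r.append (Walk.cons hadj Q) with hndef
      have hPsupp : P.support = r.support.reverse ++ [x] := by
        have : P.reverse.support.reverse = P.support := by
          rw [Walk.support_reverse, List.reverse_reverse]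
        rw [← this, hr, Walk.support_cons, List.reverse_cons]
      have hperm : n.support.Perm w.support := by
        rw [hndef, Walk.support_append, Walk.support_cons, List.tail_cons,
          ← hP, Walk.support_append, hPsupp, Q.support_eq_cons]
        have h1 : r.support ++ x :: Q.support.tail
            = (r.support ++ [x]) ++ Q.support.tail := by simp
        rw [h1]
        exact ((r.support.reverse_perm.symm).append_right [x]).append_right _
      have hnham : n.IsHamiltonian := fun a => by
        rw [hperm.count_eq a]; exact hw a
      have hedge : s(u, x) ∈ n.edges := by
        rw [hndef, Walk.edges_append, Walk.edges_cons]
        exact List.mem_append_right _ List.mem_cons_self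
      have hnedge : s(u, x) ∉ w.edges := fun hmem =>
        hxb (aux_snd_eq hb p hpath hmem)
      have heq := aux_uniq hut w n hw hnham
      exact hnedge ((Set.ext_iff.mp heq s(u, x)).mpr hedge)
    · rintro rfl; exact hb
  rw [vdeg, hset, Set.ncard_singleton]

lemma aux_deg_mid (hn : 2 ≤ Fintype.card V)
    {u v : V} (w : G.Walk u v) (hw : w.IsHamiltonian) {x : V} (hxu : x ≠ u) (hxv : x ≠ v) :
    2 ≤ vdeg G x := by
  classical
  have hpath : w.IsPath := Walk.IsPath.mk'
    (List.nodup_iff_count_le_one.mpr fun a => (hw a).le)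
  have hxmem : x ∈ w.support := hw.mem_support x
  have hP := w.take_spec hxmem
  set P : G.Walk u x := w.takeUntil x hxmem with hPdef
  set Q : G.Walk x v := w.dropUntil x hxmem with hQdef
  have hPrnil : ¬ P.reverse.Nil := Walk.not_nil_of_ne hxu
  have hQnil : ¬ Q.Nil := Walk.not_nil_of_ne hxv
  obtain ⟨a, ha, r, hr⟩ := Walk.not_nil_iff.mp hPrnil
  obtain ⟨b, hb, q, hq⟩ := Walk.not_nil_iff.mp hQnil
  have haP : a ∈ P.support := by
    rw [← List.mem_reverse, ← Walk.support_reverse, hr, Walk.support_cons]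
    exact List.mem_cons_of_mem _ r.start_mem_support
  have hbQ : b ∈ Q.support.tail := by
    rw [hq, Walk.support_cons, List.tail_cons]
    exact q.start_mem_support
  have hab : a ≠ b := by
    intro h
    have hnd : (P.support ++ Q.support.tail).Nodup := by
      rw [← Walk.support_append, hP]; exact hpath.support_nodup
    exact (List.disjoint_of_nodup_append hnd) haP (h ▸ hbQ)
  have hsub : {a, b} ⊆ G.neighborSet x := by
    rintro y (rfl | rfl)
    · exact ha
    · exact hb
  calc 2 = ({a, b} : Set V).ncard := (Set.ncard_pair hab).symm
    _ ≤ (G.neighborSet x).ncard := Set.ncard_le_ncard hsub (Set.toFinite _)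

end Aux

theorem stmt12 {V : Type*} [Fintype V] [DecidableEq V] (G : SimpleGraph V) (hn : 2 ≤ Fintype.card V)
    (hut : hamPathCount G = 1) {u v : V} (w : G.Walk u v) (hw : w.IsHamiltonian) :
    vdeg G u = 1 ∧ vdeg G v = 1 ∧ (∀ x : V, x ≠ u → x ≠ v → 2 ≤ vdeg G x) ∧
    {x : V | vdeg G x = 1}.ncard = 2 ∧ G.Connected ∧ ¬ TwoConnected G := by
  have hpath : w.IsPath := Walk.IsPath.mk'
    (List.nodup_iff_count_le_one.mpr fun a => (hw a).le)
  have hnnil : ¬ w.Nil := aux_not_nil hn hw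
  have huv : u ≠ v := by
    rintro rfl
    exact hnnil (by rw [(w.isPath_iff_eq_nil).mp hpath]; exact Walk.nil_nil)
  have hdu : vdeg G u = 1 := aux_deg_start hn hut w hw
  have hdv : vdeg G v = 1 := aux_deg_start hn hut w.reverse (aux_rev hw)
  have hmid : ∀ x : V, x ≠ u → x ≠ v → 2 ≤ vdeg G x := fun x hxu hxv =>
    aux_deg_mid hn w hw hxu hxv
  refine ⟨hdu, hdv, hmid, ?_, ?_, ?_⟩
  · have : {x : V | vdeg G x = 1} = {u, v} := by
      ext x
      simp only [Set.mem_setOf_eq, Set.mem_insert_iff, Set.mem_singleton_iff]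
      constructor
      · intro hx
        by_contra hc
        push_neg at hc
        have := hmid x hc.1 hc.2
        omega
      · rintro (rfl | rfl)
        · exact hdu
        · exact hdv
    rw [this, Set.ncard_pair huv]
  · rw [connected_iff]
    refine ⟨fun a b => ?_, ⟨u⟩⟩
    have ha : G.Reachable u a := ⟨w.takeUntil a (hw.mem_support a)⟩
    have hb : G.Reachable u b := ⟨w.takeUntil b (hw.mem_support b)⟩
    exact ha.symm.trans hb
  · rintro ⟨h3, hconn⟩
    obtain ⟨b, hb, p, hwp⟩ := Walk.not_nil_iff.mp hnnil
    have hsetu : G.neighborSet u = {b} := by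
      obtain ⟨c, hc⟩ := Set.ncard_eq_one.mp hdu
      have : b ∈ G.neighborSet u := hb
      rw [hc, Set.mem_singleton_iff] at this
      rw [hc, this]
    -- find a third vertex
    have hub : u ≠ b := hb.ne
    obtain ⟨t, htu, htb⟩ : ∃ t : V, t ≠ u ∧ t ≠ b := by
      by_contra hcon
      push_neg at hcon
      have hsub : (Finset.univ : Finset V) ⊆ {u, b} := by
        intro t _
        rcases eq_or_ne t u with rfl | h2
        · simp
        · simp [hcon t h2]
      have := Finset.card_le_card hsub
      simp only [Finset.card_univ] at this
      have h2 : ({u, b} : Finset V).card ≤ 2 :=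
        (Finset.card_insert_le _ _).trans (by simp)
      omega
    have hu' : u ∈ ({b}ᶜ : Set V) := hub
    have ht' : t ∈ ({b}ᶜ : Set V) := htb
    obtain ⟨W⟩ := (hconn b).preconnected ⟨u, hu'⟩ ⟨t, ht'⟩
    have hne : (⟨u, hu'⟩ : ({b}ᶜ : Set V)) ≠ ⟨t, ht'⟩ := by
      simp [Subtype.ext_iff, Ne.symm htu]
    obtain ⟨y, hy, W', -⟩ := Walk.not_nil_iff.mp (show ¬ W.Nil from Walk.not_nil_of_ne hne)
    have hadj : G.Adj u ↑y := by exact hy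
    have : (y : V) ∈ G.neighborSet u := hadj
    rw [hsetu, Set.mem_singleton_iff] at this
    exact y.2 this
end

section
/- Let G be a uniquely hamiltonian graph containing a vertex v of degree 2 with neighbours a and b. Then the graph obtained from G by deleting v and adding two new vertices v' and v'' together with the edges v'a and v''b (so that v is split into two vertices of degree 1) is uniquely traceable. -/
open SimpleGraph

/-- The graph obtained from `G` by deleting the vertex `v` and adding two new vertices
`Sum.inr false` and `Sum.inr true` joined to `a` and `b`, respectively (splitting `v` into
two vertices of degree `1`). -/
def splitVertex {V : Type*} (G : SimpleGraph V) (v a b : V) :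
    SimpleGraph ({x : V // x ≠ v} ⊕ Bool) :=
  SimpleGraph.fromRel (fun x y =>
    match x, y with
    | Sum.inl p, Sum.inl q => G.Adj p q
    | Sum.inl p, Sum.inr i => (i = false ∧ (p : V) = a) ∨ (i = true ∧ (p : V) = b)
    | _, _ => False)

section AuxSplit

variable {V : Type*} {G : SimpleGraph V} {v a b : V}

/-- projection back to `V`, sending both new vertices to `v`. -/
abbrev prj (v : V) : ({x : V // x ≠ v} ⊕ Bool) → V := fun z =>
  match z with
  | Sum.inl p => p.val
  | Sum.inr _ => v

/-- embedding of `V` into the split vertex type. -/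
noncomputable def emV (v : V) : V → ({x : V // x ≠ v} ⊕ Bool) := fun z =>
  letI := Classical.dec (z = v)
  if h : z = v then Sum.inr false else Sum.inl ⟨z, h⟩

lemma emV_of_ne {z : V} (h : z ≠ v) : emV v z = Sum.inl ⟨z, h⟩ := by
  simp [emV, h]

lemma emV_prj {z : {x : V // x ≠ v} ⊕ Bool} (h : ∃ p, z = Sum.inl p) : emV v (prj v z) = z := by
  obtain ⟨p, rfl⟩ := h
  simp [prj, emV_of_ne p.2]

@[simp] lemma prj_inl (p : {x : V // x ≠ v}) : prj v (Sum.inl p) = p.val := rfl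

@[simp] lemma prj_inr (i : Bool) : prj v (Sum.inr i) = v := rfl

lemma splitVertex_adj_inl {p q : {x : V // x ≠ v}} :
    (splitVertex G v a b).Adj (Sum.inl p) (Sum.inl q) ↔ G.Adj p q := by
  constructor
  · rintro ⟨hne, h | h⟩
    · exact h
    · exact h.symm
  · intro h
    exact ⟨by simp only [ne_eq, Sum.inl.injEq]; rintro rfl; exact G.irrefl h, Or.inl h⟩

lemma splitVertex_adj_inrF {z : {x : V // x ≠ v} ⊕ Bool} (ha : a ≠ v) :
    (splitVertex G v a b).Adj (Sum.inr false) z ↔ z = Sum.inl ⟨a, ha⟩ := by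
  constructor
  · rintro ⟨hne, h | h⟩ <;> rcases z with p | i
    · exact absurd h id
    · exact absurd h id
    · rcases h with ⟨_, h2⟩ | ⟨h1, _⟩
      · apply congrArg Sum.inl; apply Subtype.ext; exact h2
      · exact absurd h1 (by simp)
    · exact absurd h id
  · rintro rfl
    exact ⟨by simp, Or.inr (Or.inl ⟨rfl, rfl⟩)⟩

lemma splitVertex_adj_inrT {z : {x : V // x ≠ v} ⊕ Bool} (hb : b ≠ v) :
    (splitVertex G v a b).Adj (Sum.inr true) z ↔ z = Sum.inl ⟨b, hb⟩ := by
  constructor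
  · rintro ⟨hne, h | h⟩ <;> rcases z with p | i
    · exact absurd h id
    · exact absurd h id
    · rcases h with ⟨h1, _⟩ | ⟨_, h2⟩
      · exact absurd h1 (by simp)
      · apply congrArg Sum.inl; apply Subtype.ext; exact h2
    · exact absurd h id
  · rintro rfl
    exact ⟨by simp, Or.inr (Or.inr ⟨rfl, rfl⟩)⟩

/-- Lift a walk of `G` avoiding `v` to a walk of the split graph. -/
def liftWalk : ∀ {x y : V} (q : G.Walk x y) (hq : ∀ z ∈ q.support, z ≠ v),
    (splitVertex G v a b).Walk (Sum.inl ⟨x, hq x q.start_mem_support⟩)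
      (Sum.inl ⟨y, hq y q.end_mem_support⟩)
  | _, _, SimpleGraph.Walk.nil, _ => SimpleGraph.Walk.nil
  | _, _, SimpleGraph.Walk.cons h p, hq =>
      SimpleGraph.Walk.cons (splitVertex_adj_inl.mpr h)
        (liftWalk p (fun z hz => hq z (by simp [hz])))

lemma liftWalk_support_map {x y : V} (q : G.Walk x y) (hq : ∀ z ∈ q.support, z ≠ v) :
    (liftWalk (a := a) (b := b) q hq).support.map (prj v) = q.support := by
  induction q with
  | nil => simp [liftWalk]
  | cons h p ih => simp [liftWalk, ih]

lemma liftWalk_support_inl {x y : V} (q : G.Walk x y) (hq : ∀ z ∈ q.support, z ≠ v) :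
    ∀ z ∈ (liftWalk (a := a) (b := b) q hq).support, ∃ p, z = Sum.inl p := by
  induction q with
  | nil =>
      intro z hz
      simp only [liftWalk, SimpleGraph.Walk.support_nil, List.mem_singleton] at hz
      exact ⟨_, hz⟩
  | cons h p ih =>
      intro z hz
      simp only [liftWalk, SimpleGraph.Walk.support_cons, List.mem_cons] at hz
      rcases hz with hz | hz
      · exact ⟨_, hz⟩
      · exact ih _ z hz

lemma liftWalk_edges_map {x y : V} (q : G.Walk x y) (hq : ∀ z ∈ q.support, z ≠ v) :
    (liftWalk (a := a) (b := b) q hq).edges.map (Sym2.map (prj v)) = q.edges := by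
  induction q with
  | nil => simp [liftWalk]
  | cons h p ih => simp [liftWalk, ih]

/-- Project a walk of the split graph avoiding the new vertices down to `G`. -/
def projWalk : ∀ {x y : {x : V // x ≠ v} ⊕ Bool} (r : (splitVertex G v a b).Walk x y)
    (_ : ∀ z ∈ r.support, ∃ p, z = Sum.inl p), G.Walk (prj v x) (prj v y)
  | _, _, SimpleGraph.Walk.nil, _ => SimpleGraph.Walk.nil
  | _, _, @SimpleGraph.Walk.cons _ _ x y z h r, hr =>
      SimpleGraph.Walk.cons
        (by
          obtain ⟨p, hp⟩ := hr x (by simp)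
          obtain ⟨q, hq⟩ := hr y (by simp)
          rw [hp, hq] at h ⊢
          exact splitVertex_adj_inl.mp h)
        (projWalk r (fun z hz => hr z (by simp [hz])))

lemma projWalk_support {x y : {x : V // x ≠ v} ⊕ Bool} (r : (splitVertex G v a b).Walk x y)
    (hr : ∀ z ∈ r.support, ∃ p, z = Sum.inl p) :
    (projWalk r hr).support = r.support.map (prj v) := by
  induction r with
  | nil => simp [projWalk]
  | cons h p ih => simp [projWalk, ih]

lemma projWalk_edges {x y : {x : V // x ≠ v} ⊕ Bool} (r : (splitVertex G v a b).Walk x y)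
    (hr : ∀ z ∈ r.support, ∃ p, z = Sum.inl p) :
    (projWalk r hr).edges = r.edges.map (Sym2.map (prj v)) := by
  induction r with
  | nil => simp [projWalk]
  | cons h p ih => simp [projWalk, ih]

end AuxSplit

section AuxSplit2

variable {V : Type*} {G : SimpleGraph V} {v a b : V}

open SimpleGraph.Walk in
lemma isPath_concat {u x w : V} {p : G.Walk u x} (h : G.Adj x w) (hp : p.IsPath)
    (hw : w ∉ p.support) : (p.concat h).IsPath := by
  rw [← SimpleGraph.Walk.isPath_reverse_iff, SimpleGraph.Walk.reverse_concat]
  exact (hp.reverse).cons (by simpa [SimpleGraph.Walk.support_reverse] using hw)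

/-- In a path, a vertex with a unique neighbour must be an endpoint. -/
lemma endpoint_of_unique_nbr {W' : Type*} [DecidableEq W'] {H : SimpleGraph W'} {u₁ u₂ : W'} {w : H.Walk u₁ u₂}
    (hw : w.IsPath) (t n : W') (ht : t ∈ w.support) (hn : ∀ z, H.Adj t z → z = n) :
    t = u₁ ∨ t = u₂ := by
  by_contra hcon
  push_neg at hcon
  obtain ⟨h1, h2⟩ := hcon
  have hspec := w.take_spec ht
  have hnd : (w.takeUntil t ht).support.Nodup ∧ ((w.dropUntil t ht).support.tail).Nodup ∧
      ((w.takeUntil t ht).support).Disjoint ((w.dropUntil t ht).support.tail) := by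
    have := hw.support_nodup
    rw [← hspec, SimpleGraph.Walk.support_append, List.nodup_append'] at this
    exact this
  -- n is in the support of takeUntil
  obtain ⟨z₁, hadj₁, r₁, hr₁⟩ := SimpleGraph.Walk.not_nil_iff.mp
    (SimpleGraph.Walk.not_nil_of_ne h1 (p := (w.takeUntil t ht).reverse))
  have hz₁ : z₁ = n := hn z₁ hadj₁
  have hn1 : n ∈ (w.takeUntil t ht).support := by
    have : z₁ ∈ (w.takeUntil t ht).reverse.support := by
      rw [hr₁]; simp
    rwa [SimpleGraph.Walk.support_reverse, List.mem_reverse, hz₁] at this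
  -- n is in the tail of the support of dropUntil
  obtain ⟨z₂, hadj₂, r₂, hr₂⟩ := SimpleGraph.Walk.not_nil_iff.mp
    (SimpleGraph.Walk.not_nil_of_ne h2 (p := w.dropUntil t ht))
  have hz₂ : z₂ = n := hn z₂ hadj₂
  have hn2 : n ∈ (w.dropUntil t ht).support.tail := by
    rw [hr₂]
    subst hz₂
    set_option linter.unnecessarySimpa false in
    simpa using SimpleGraph.Walk.start_mem_support r₂
  exact hnd.2.2 hn1 hn2

lemma isHamiltonian_reverse {W' : Type*} [DecidableEq W'] {H : SimpleGraph W'} {u₁ u₂ : W'}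
    {w : H.Walk u₁ u₂} (hw : w.IsHamiltonian) : w.reverse.IsHamiltonian := by
  intro z
  rw [SimpleGraph.Walk.support_reverse, List.count_reverse]
  exact hw z

lemma isHamiltonianCycle_rotate [DecidableEq V] {u : V} {w : G.Walk u u}
    (hw : w.IsHamiltonianCycle) (h : v ∈ w.support) : (w.rotate v h).IsHamiltonianCycle := by
  rw [SimpleGraph.Walk.isHamiltonianCycle_iff_isCycle_and_support_count_tail_eq_one] at hw ⊢
  refine ⟨hw.1.rotate h, fun z => ?_⟩
  rw [(SimpleGraph.Walk.support_rotate w v h).perm.count_eq]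
  exact hw.2 z

lemma sym2_emV_prj {e : Sym2 ({x : V // x ≠ v} ⊕ Bool)} (h : ∀ z ∈ e, ∃ p, z = Sum.inl p) :
    Sym2.map (emV v) (Sym2.map (prj v) e) = e := by
  induction e using Sym2.ind with
  | _ x y =>
      rw [Sym2.map_pair_eq, Sym2.map_pair_eq,
        emV_prj (h x (by simp)), emV_prj (h y (by simp))]

lemma image_emV_of_map {l : List (Sym2 ({x : V // x ≠ v} ⊕ Bool))}
    (hl : ∀ e ∈ l, ∀ z ∈ e, ∃ p, z = Sum.inl p) :
    Sym2.map (emV v) '' {e | e ∈ l.map (Sym2.map (prj v))} = {e | e ∈ l} := by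
  ext e
  constructor
  · rintro ⟨e', he', rfl⟩
    simp only [Set.mem_setOf_eq, List.mem_map] at he'
    obtain ⟨e₀, he₀, rfl⟩ := he'
    rw [sym2_emV_prj (hl e₀ he₀)]
    exact he₀
  · intro he
    exact ⟨Sym2.map (prj v) e, by simpa using ⟨e, he, rfl⟩, sym2_emV_prj (hl e he)⟩

lemma insert_insert_cancel {α : Type*} {x y : α} {s t : Set α}
    (hxs : x ∉ s) (hys : y ∉ s) (hxt : x ∉ t) (hyt : y ∉ t)
    (h : insert x (insert y s) = insert x (insert y t)) : s = t := by
  ext e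
  constructor
  · intro he
    have hex : e ≠ x := fun h' => hxs (h' ▸ he)
    have hey : e ≠ y := fun h' => hys (h' ▸ he)
    have : e ∈ insert x (insert y t) := h ▸ (by simp [he])
    simpa [hex, hey] using this
  · intro he
    have hex : e ≠ x := fun h' => hxt (h' ▸ he)
    have hey : e ≠ y := fun h' => hyt (h' ▸ he)
    have : e ∈ insert x (insert y s) := h ▸ (by simp [he])
    simpa [hex, hey] using this

end AuxSplit2

section AuxSplit3

open SimpleGraph.Walk

variable {V : Type*} {G : SimpleGraph V} {v a b : V}

/-- From a hamiltonian `a`–`b`-path of `G - v`, build a hamiltonian path of the split graph. -/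
lemma split_exists_ham_path [DecidableEq ({x : V // x ≠ v} ⊕ Bool)] (ha : a ≠ v) (hb : b ≠ v)
    (q : G.Walk a b) (hqp : q.IsPath) (hqv : ∀ z ∈ q.support, z ≠ v)
    (hcov : ∀ z : V, z ≠ v → z ∈ q.support) :
    ∃ w : (splitVertex G v a b).Walk (Sum.inr false) (Sum.inr true),
      w.IsHamiltonian ∧
      {e | e ∈ w.edges} =
        insert s(Sum.inr false, Sum.inl ⟨a, ha⟩)
          (insert s(Sum.inl ⟨b, hb⟩, Sum.inr true)
            (Sym2.map (emV v) '' {e | e ∈ q.edges})) := by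
  have hF : (splitVertex G v a b).Adj (Sum.inr false) (Sum.inl ⟨a, ha⟩) :=
    (splitVertex_adj_inrF ha).mpr rfl
  have hT : (splitVertex G v a b).Adj (Sum.inl ⟨b, hb⟩) (Sum.inr true) :=
    ((splitVertex_adj_inrT hb).mpr rfl).symm
  set L := liftWalk (a := a) (b := b) q hqv with hL
  have hLsupp := liftWalk_support_map (a := a) (b := b) q hqv
  have hLinl := liftWalk_support_inl (a := a) (b := b) q hqv
  have hLedges := liftWalk_edges_map (a := a) (b := b) q hqv
  have hLpath : L.IsPath := by
    apply SimpleGraph.Walk.IsPath.mk'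
    apply List.Nodup.of_map (prj v)
    rw [hLsupp]
    exact hqp.support_nodup
  have hTnot : Sum.inr true ∉ L.support := fun hmem => by
    obtain ⟨p, hp⟩ := hLinl _ hmem
    exact absurd hp (by simp)
  have hFnot : Sum.inr false ∉ (L.concat hT).support := by
    rw [SimpleGraph.Walk.support_concat, List.mem_append]
    rintro (hmem | hmem)
    · obtain ⟨p, hp⟩ := hLinl _ hmem
      exact absurd hp (by simp)
    · simp at hmem
  refine ⟨SimpleGraph.Walk.cons hF (L.concat hT), ?_, ?_⟩
  · apply SimpleGraph.Walk.IsPath.isHamiltonian_of_mem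
    · exact (isPath_concat hT hLpath hTnot).cons hFnot
    · intro z
      rw [SimpleGraph.Walk.support_cons, SimpleGraph.Walk.support_concat]
      rcases z with p | i
      · have : (p : V) ∈ L.support.map (prj v) := hLsupp ▸ hcov p p.2
        obtain ⟨z', hz', hz'e⟩ := List.mem_map.mp this
        obtain ⟨p', hp'⟩ := hLinl _ hz'
        subst hp'
        have : p' = p := Subtype.ext hz'e
        subst this
        simp [hz']
      · cases i <;> simp
  · ext e
    have himg : Sym2.map (emV v) '' {e | e ∈ q.edges} = {e | e ∈ L.edges} := by
      rw [← hLedges]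
      apply image_emV_of_map
      intro e he z hz
      apply hLinl
      induction e using Sym2.ind with
      | _ x y =>
          rcases Sym2.mem_iff.mp hz with rfl | rfl
          · exact SimpleGraph.Walk.fst_mem_support_of_mem_edges _ he
          · exact SimpleGraph.Walk.snd_mem_support_of_mem_edges _ he
    rw [himg]
    simp only [SimpleGraph.Walk.edges_cons, SimpleGraph.Walk.edges_concat,
      List.concat_eq_append, Set.mem_setOf_eq,
      List.mem_cons, List.mem_append, List.mem_singleton, Set.mem_insert_iff]
    tauto

/-- Decompose a hamiltonian cycle of `G` through `v` into an `a`-`b` path avoiding `v`. -/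
lemma cycle_decomp [DecidableEq V] (hva : G.Adj v a) (hvb : G.Adj v b) (hab : a ≠ b)
    (hnbr : ∀ z, G.Adj v z → z = a ∨ z = b)
    (w : G.Walk v v) (hw : w.IsHamiltonianCycle) :
    ∃ q : G.Walk a b, q.IsPath ∧ (∀ z ∈ q.support, z ≠ v) ∧ (∀ z : V, z ≠ v → z ∈ q.support) ∧
      {e | e ∈ w.edges} = insert s(v, a) (insert s(v, b) {e | e ∈ q.edges}) := by
  cases w with
  | nil => exact absurd rfl hw.ne_nil
  | cons h p =>
    rename_i x
    have hcyc := hw.isCycle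
    rw [SimpleGraph.Walk.cons_isCycle_iff] at hcyc
    obtain ⟨hppath, hedge⟩ := hcyc
    cases p with
    | nil => exact absurd h (G.irrefl)
    | cons h₁ p₁ =>
      obtain ⟨y, q, h₂, hq⟩ := SimpleGraph.Walk.exists_cons_eq_concat h₁ p₁
      rw [hq] at hppath hedge hw ⊢
      -- support facts
      have hsupp : (q.concat h₂).support = q.support ++ [v] := by
        rw [SimpleGraph.Walk.support_concat]
      have hnd : (q.support ++ [v]).Nodup := by
        rw [← hsupp]; exact hppath.support_nodup
      have hvq : v ∉ q.support := by
        rcases List.nodup_append'.mp hnd with ⟨_, _, hdisj⟩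
        intro hmem
        exact hdisj hmem (by simp)
      have hqpath : q.IsPath := SimpleGraph.Walk.IsPath.mk'
        ((List.nodup_append'.mp hnd).1)
      have hvq' : ∀ z ∈ q.support, z ≠ v := fun z hz h' => hvq (h' ▸ hz)
      have hcov : ∀ z : V, z ≠ v → z ∈ q.support := by
        intro z hz
        have := hw.mem_support z
        rw [SimpleGraph.Walk.support_cons, hsupp] at this
        simp only [List.mem_cons, List.mem_append, List.mem_singleton] at this
        tauto
      have hx : x = a ∨ x = b := hnbr x h
      have hy : y = a ∨ y = b := hnbr y h₂.symm
      have hxy : x ≠ y := by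
        rintro rfl
        apply hedge
        rw [SimpleGraph.Walk.edges_concat, List.concat_eq_append, List.mem_append]
        right
        simp [Sym2.eq_swap]
      have hset : {e | e ∈ (SimpleGraph.Walk.cons h (q.concat h₂)).edges} =
          insert s(v, x) (insert s(y, v) {e | e ∈ q.edges}) := by
        ext e
        simp only [SimpleGraph.Walk.edges_cons, SimpleGraph.Walk.edges_concat,
          List.concat_eq_append, Set.mem_setOf_eq,
          List.mem_cons, List.mem_append, List.mem_singleton, Set.mem_insert_iff]
        tauto
      rcases hx with rfl | rfl
      · -- x = a, so y = b
        have hyb : y = b := hy.resolve_left (fun h' => hxy h'.symm)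
        subst hyb
        refine ⟨q, hqpath, hvq', hcov, ?_⟩
        rw [hset, Sym2.eq_swap (a := y)]
      · -- x = b, so y = a
        have hya : y = a := hy.resolve_right (fun h' => hxy h'.symm)
        subst hya
        refine ⟨q.reverse, hqpath.reverse, ?_, ?_, ?_⟩
        · intro z hz
          exact hvq' z (by rwa [SimpleGraph.Walk.support_reverse, List.mem_reverse] at hz)
        · intro z hz
          rw [SimpleGraph.Walk.support_reverse, List.mem_reverse]
          exact hcov z hz
        · rw [hset, Sym2.eq_swap (a := y)]
          have : {e | e ∈ q.reverse.edges} = {e | e ∈ q.edges} := by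
            ext e; simp [SimpleGraph.Walk.edges_reverse]
          rw [this, Set.insert_comm]

end AuxSplit3

section AuxSplit4

open SimpleGraph.Walk

variable {V : Type*} {G : SimpleGraph V} {v a b : V}

/-- From a hamiltonian path of the split graph, reconstruct a hamiltonian cycle of `G`. -/
lemma split_cycle_of_path [DecidableEq V] (hva : G.Adj v a) (hvb : G.Adj v b) (hab : a ≠ b)
    (ha : a ≠ v) (hb : b ≠ v)
    (r : (splitVertex G v a b).Walk (Sum.inl ⟨a, ha⟩) (Sum.inl ⟨b, hb⟩)) (hr : r.IsPath)
    (hinl : ∀ z ∈ r.support, ∃ p, z = Sum.inl p)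
    (hcovr : ∀ p : {x : V // x ≠ v}, Sum.inl p ∈ r.support) :
    (SimpleGraph.Walk.cons hva ((projWalk r hinl).concat hvb.symm)).IsHamiltonianCycle ∧
      {e | e ∈ (SimpleGraph.Walk.cons hva ((projWalk r hinl).concat hvb.symm)).edges} =
        insert s(v, a) (insert s(v, b) {e | e ∈ (projWalk r hinl).edges}) := by
  set P := projWalk r hinl with hPdef
  have hPsupp : P.support = r.support.map (prj v) := projWalk_support r hinl
  have hPnd : P.support.Nodup := by
    rw [hPsupp]
    refine List.Nodup.map_on ?_ hr.support_nodup
    intro z hz z' hz' hzz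
    obtain ⟨p, rfl⟩ := hinl z hz
    obtain ⟨p', rfl⟩ := hinl z' hz'
    change (p : V) = p' at hzz
    exact congrArg Sum.inl (Subtype.ext hzz)
  have hvP : v ∉ P.support := by
    rw [hPsupp]
    rintro hmem
    obtain ⟨z, hz, hze⟩ := List.mem_map.mp hmem
    obtain ⟨p, rfl⟩ := hinl z hz
    exact p.2 (by simpa using hze)
  have hcovP : ∀ z : V, z ≠ v → z ∈ P.support := by
    intro z hz
    rw [hPsupp]
    exact List.mem_map.mpr ⟨Sum.inl ⟨z, hz⟩, hcovr ⟨z, hz⟩, rfl⟩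
  have hPpath : P.IsPath := SimpleGraph.Walk.IsPath.mk' hPnd
  have hvaP : s(v, a) ∉ (P.concat hvb.symm).edges := by
    rw [SimpleGraph.Walk.edges_concat, List.concat_eq_append, List.mem_append]
    rintro (hmem | hmem)
    · exact hvP (SimpleGraph.Walk.fst_mem_support_of_mem_edges P hmem)
    · rw [List.mem_singleton, Sym2.eq_iff] at hmem
      rcases hmem with ⟨h1, h2⟩ | ⟨h1, h2⟩
      · exact hb (h1.symm)
      · exact hab h2
  constructor
  · rw [SimpleGraph.Walk.isHamiltonianCycle_iff_isCycle_and_support_count_tail_eq_one]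
    constructor
    · rw [SimpleGraph.Walk.cons_isCycle_iff]
      exact ⟨isPath_concat hvb.symm hPpath hvP, hvaP⟩
    · intro z
      have htail : (SimpleGraph.Walk.cons hva (P.concat hvb.symm)).support.tail =
          P.support ++ [v] := by
        rw [SimpleGraph.Walk.support_cons, List.tail_cons, SimpleGraph.Walk.support_concat]
      rw [htail, List.count_append]
      by_cases hzv : z = v
      · subst hzv
        rw [List.count_eq_zero.mpr hvP]
        simp
      · rw [List.count_eq_one_of_mem hPnd (hcovP z hzv)]
        simp [hzv, List.count_eq_zero]
  · ext e
    simp only [SimpleGraph.Walk.edges_cons, SimpleGraph.Walk.edges_concat,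
      List.concat_eq_append, Set.mem_setOf_eq, List.mem_cons, List.mem_append,
      List.mem_singleton, List.not_mem_nil, or_false, Set.mem_insert_iff]
    constructor
    · rintro (rfl | h' | h')
      · exact Or.inl rfl
      · exact Or.inr (Or.inr h')
      · exact Or.inr (Or.inl (h'.trans Sym2.eq_swap))
    · rintro (rfl | rfl | h')
      · exact Or.inl rfl
      · exact Or.inr (Or.inr (Sym2.eq_swap : s(v, b) = s(b, v)))
      · exact Or.inr (Or.inl h')

/-- Decompose a hamiltonian path of the split graph. -/
lemma split_path_decomp [DecidableEq ({x : V // x ≠ v} ⊕ Bool)] (ha : a ≠ v) (hb : b ≠ v)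
    (w : (splitVertex G v a b).Walk (Sum.inr false) (Sum.inr true)) (hw : w.IsHamiltonian) :
    ∃ r : (splitVertex G v a b).Walk (Sum.inl ⟨a, ha⟩) (Sum.inl ⟨b, hb⟩),
      r.IsPath ∧ (∀ z ∈ r.support, ∃ p, z = Sum.inl p) ∧
      (∀ p : {x : V // x ≠ v}, Sum.inl p ∈ r.support) ∧
      {e | e ∈ w.edges} =
        insert s(Sum.inr false, Sum.inl ⟨a, ha⟩)
          (insert s(Sum.inl ⟨b, hb⟩, Sum.inr true) {e | e ∈ r.edges}) := by
  have hwp : w.IsPath := hw.isPath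
  obtain ⟨z₁, hadj₁, w₁, hw₁⟩ := SimpleGraph.Walk.not_nil_iff.mp
    (SimpleGraph.Walk.not_nil_of_ne (by simp) (p := w))
  have hz₁ : z₁ = Sum.inl ⟨a, ha⟩ := (splitVertex_adj_inrF ha).mp hadj₁
  subst hz₁
  obtain ⟨z₂, hadj₂, w₂, hw₂⟩ := SimpleGraph.Walk.not_nil_iff.mp
    (SimpleGraph.Walk.not_nil_of_ne (by simp) (p := w₁.reverse))
  have hz₂ : z₂ = Sum.inl ⟨b, hb⟩ := (splitVertex_adj_inrT hb).mp hadj₂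
  subst hz₂
  have hw₁' : w₁ = w₂.reverse.concat hadj₂.symm := by
    rw [← SimpleGraph.Walk.reverse_reverse w₁, hw₂, SimpleGraph.Walk.reverse_cons,
      SimpleGraph.Walk.concat_eq_append]
  set r := w₂.reverse with hrdef
  have hweq : w = SimpleGraph.Walk.cons hadj₁ (r.concat hadj₂.symm) := by
    rw [hw₁, hw₁']
  have hsupp : w.support = Sum.inr false :: (r.support ++ [Sum.inr true]) := by
    rw [hweq, SimpleGraph.Walk.support_cons, SimpleGraph.Walk.support_concat]
  have hnd : (Sum.inr false :: (r.support ++ [Sum.inr true])).Nodup := by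
    rw [← hsupp]; exact hwp.support_nodup
  have hnd' := hnd.of_cons
  have hFr : Sum.inr false ∉ r.support := by
    intro hmem
    exact (List.nodup_cons.mp hnd).1 (List.mem_append.mpr (Or.inl hmem))
  have hTr : Sum.inr true ∉ r.support := by
    intro hmem
    rcases List.nodup_append'.mp hnd' with ⟨_, _, hdisj⟩
    exact hdisj hmem (by simp)
  refine ⟨r, ?_, ?_, ?_, ?_⟩
  · exact SimpleGraph.Walk.IsPath.mk' (List.nodup_append'.mp hnd').1
  · intro z hz
    rcases z with p | i
    · exact ⟨p, rfl⟩
    · cases i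
      · exact absurd hz hFr
      · exact absurd hz hTr
  · intro p
    have := hw.mem_support (Sum.inl p)
    rw [hsupp] at this
    simp only [List.mem_cons, List.mem_append, List.mem_singleton] at this
    rcases this with h' | h' | h'
    · exact absurd h' (by simp)
    · exact h'
    · exact absurd h' (by simp)
  · rw [hweq]
    ext e
    simp only [SimpleGraph.Walk.edges_cons, SimpleGraph.Walk.edges_concat,
      List.concat_eq_append, Set.mem_setOf_eq, List.mem_cons, List.mem_append,
      List.mem_singleton, Set.mem_insert_iff]
    tauto

end AuxSplit4

theorem stmt14 {V : Type*} [Fintype V] (G : SimpleGraph V)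
    (huh : hamCount G = 1) {v a b : V} (hva : G.Adj v a) (hvb : G.Adj v b)
    (hab : a ≠ b) (hdeg : vdeg G v = 2) :
    hamPathCount (splitVertex G v a b) = 1 := by
  letI instV : DecidableEq V := Classical.decEq V
  letI instW : DecidableEq ({x : V // x ≠ v} ⊕ Bool) := Classical.decEq _
  have ha : a ≠ v := (G.ne_of_adj hva).symm
  have hb : b ≠ v := (G.ne_of_adj hvb).symm
  rw [hamCount, Set.ncard_eq_one] at huh
  obtain ⟨s₀, hs₀⟩ := huh
  have hnbr : ∀ z, G.Adj v z → z = a ∨ z = b := by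
    have hsub : ({a, b} : Set V) ⊆ G.neighborSet v := by
      rintro z (rfl | rfl)
      · exact hva
      · exact hvb
    have hcard : (G.neighborSet v).ncard ≤ ({a, b} : Set V).ncard := by
      rw [Set.ncard_pair hab]
      rw [vdeg] at hdeg
      omega
    have heq := Set.eq_of_subset_of_ncard_le hsub hcard (Set.toFinite _)
    intro z hz
    have hz' : z ∈ G.neighborSet v := hz
    rw [← heq] at hz'
    simpa using hz'
  have hmem : s₀ ∈ hamCycleSets G := by rw [hs₀]; exact Set.mem_singleton _
  obtain ⟨u, w₀, hw₀, hs₀e⟩ := hmem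
  have hvsup : v ∈ w₀.support := hw₀.mem_support v
  have hw' : (w₀.rotate v hvsup).IsHamiltonianCycle := isHamiltonianCycle_rotate hw₀ hvsup
  have hedges' : {e | e ∈ (w₀.rotate v hvsup).edges} = s₀ := by
    rw [← hs₀e]
    ext e
    simp [(SimpleGraph.Walk.rotate_edges w₀ v hvsup).perm.mem_iff]
  obtain ⟨q₀, hq₀p, hq₀v, hq₀cov, hq₀set⟩ := cycle_decomp hva hvb hab hnbr _ hw'
  have hs₀eq : s₀ = insert s(v, a) (insert s(v, b) {e | e ∈ q₀.edges}) := by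
    rw [← hedges', hq₀set]
  obtain ⟨P₀, hP₀ham, hP₀set⟩ := split_exists_ham_path ha hb q₀ hq₀p hq₀v hq₀cov
  set S₀ : Set (Sym2 ({x : V // x ≠ v} ⊕ Bool)) :=
    insert s(Sum.inr false, Sum.inl ⟨a, ha⟩)
      (insert s(Sum.inl ⟨b, hb⟩, Sum.inr true)
        (Sym2.map (emV v) '' {e | e ∈ q₀.edges})) with hS₀def
  have key : ∀ w : (splitVertex G v a b).Walk (Sum.inr false) (Sum.inr true),
      w.IsHamiltonian → {e | e ∈ w.edges} = S₀ := by
    intro w hw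
    obtain ⟨r, hrp, hrinl, hrcov, hrset⟩ := split_path_decomp ha hb w hw
    obtain ⟨hcyc, hcset⟩ := split_cycle_of_path hva hvb hab ha hb r hrp hrinl hrcov
    have hcmem : {e | e ∈ (SimpleGraph.Walk.cons hva
        ((projWalk r hrinl).concat hvb.symm)).edges} ∈ hamCycleSets G :=
      ⟨v, _, hcyc, rfl⟩
    rw [hs₀, Set.mem_singleton_iff] at hcmem
    have hvproj : v ∉ (projWalk r hrinl).support := by
      rw [projWalk_support]
      intro hmemv
      obtain ⟨z, hz, hze⟩ := List.mem_map.mp hmemv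
      obtain ⟨p, rfl⟩ := hrinl z hz
      exact p.2 (by simpa using hze)
    have hnot1 : s(v, a) ∉ {e | e ∈ (projWalk r hrinl).edges} := fun hmem' =>
      hvproj (SimpleGraph.Walk.fst_mem_support_of_mem_edges _ hmem')
    have hnot2 : s(v, b) ∉ {e | e ∈ (projWalk r hrinl).edges} := fun hmem' =>
      hvproj (SimpleGraph.Walk.fst_mem_support_of_mem_edges _ hmem')
    have hnot3 : s(v, a) ∉ {e | e ∈ q₀.edges} := fun hmem' =>
      (hq₀v v (SimpleGraph.Walk.fst_mem_support_of_mem_edges _ hmem')) rfl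
    have hnot4 : s(v, b) ∉ {e | e ∈ q₀.edges} := fun hmem' =>
      (hq₀v v (SimpleGraph.Walk.fst_mem_support_of_mem_edges _ hmem')) rfl
    have hPedges : {e | e ∈ (projWalk r hrinl).edges} = {e | e ∈ q₀.edges} := by
      apply insert_insert_cancel hnot1 hnot2 hnot3 hnot4
      rw [← hcset, hcmem, hs₀eq]
    have himg : Sym2.map (emV v) '' {e | e ∈ (projWalk r hrinl).edges} = {e | e ∈ r.edges} := by
      rw [projWalk_edges]
      apply image_emV_of_map
      intro e he z hz
      apply hrinl
      induction e using Sym2.ind with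
      | _ x y =>
          rcases Sym2.mem_iff.mp hz with rfl | rfl
          · exact SimpleGraph.Walk.fst_mem_support_of_mem_edges _ he
          · exact SimpleGraph.Walk.snd_mem_support_of_mem_edges _ he
    rw [hrset, hS₀def, ← hPedges, himg]
  rw [hamPathCount, Set.ncard_eq_one]
  refine ⟨S₀, ?_⟩
  ext S
  simp only [Set.mem_singleton_iff]
  constructor
  · intro hS
    obtain ⟨u₁, u₂, w, hwham, hSeq⟩ := hS
    have hFnb : ∀ z, (splitVertex G v a b).Adj (Sum.inr false) z → z = Sum.inl ⟨a, ha⟩ :=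
      fun z hz => (splitVertex_adj_inrF ha).mp hz
    have hTnb : ∀ z, (splitVertex G v a b).Adj (Sum.inr true) z → z = Sum.inl ⟨b, hb⟩ :=
      fun z hz => (splitVertex_adj_inrT hb).mp hz
    have heF := endpoint_of_unique_nbr hwham.isPath (Sum.inr false) _
      (hwham.mem_support _) hFnb
    have heT := endpoint_of_unique_nbr hwham.isPath (Sum.inr true) _
      (hwham.mem_support _) hTnb
    rcases heF with hF | hF <;> rcases heT with hT | hT
    · exact absurd (hF.trans hT.symm) (by simp)
    · subst hF; subst hT
      rw [← hSeq]
      exact key w hwham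
    · subst hF; subst hT
      rw [← hSeq]
      have hrev : {e | e ∈ w.edges} = {e | e ∈ w.reverse.edges} := by
        ext e; simp [SimpleGraph.Walk.edges_reverse]
      rw [hrev]
      exact key w.reverse (isHamiltonian_reverse hwham)
    · exact absurd (hF.trans hT.symm) (by simp)
  · rintro rfl
    exact ⟨Sum.inr false, Sum.inr true, P₀, hP₀ham, hP₀set⟩
end

section
/- For every n ≥ 2, every uniquely traceable graph of order n has at most ⌊(n − 1)²/4⌋ + 1 edges. -/
open SimpleGraph

namespace UT15
variable {V : Type*} {G : SimpleGraph V}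

variable {V : Type*} {G : SimpleGraph V}

def buildWalk (G : SimpleGraph V) (f : ℕ → V) :
    ∀ m, (∀ k, k < m → G.Adj (f k) (f (k+1))) → G.Walk (f 0) (f m)
  | 0, _ => Walk.nil
  | (m+1), h => (buildWalk G f m (fun k hk => h k (by omega))).concat (h m (by omega))

lemma buildWalk_support (f : ℕ → V) (m : ℕ) (h : ∀ k, k < m → G.Adj (f k) (f (k+1))) :
    (buildWalk G f m h).support = (List.range (m+1)).map f := by
  induction m with
  | zero => simp [buildWalk, show List.range 1 = [0] from rfl]
  | succ m ih =>
      rw [buildWalk, Walk.support_concat, ih, List.range_succ (n := m+1)]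
      simp

lemma buildWalk_edges (f : ℕ → V) (m : ℕ) (h : ∀ k, k < m → G.Adj (f k) (f (k+1))) :
    (buildWalk G f m h).edges = (List.range m).map (fun k => s(f k, f (k+1))) := by
  induction m with
  | zero => simp [buildWalk, show List.range 1 = [0] from rfl]
  | succ m ih =>
      rw [buildWalk, Walk.edges_concat, ih, List.range_succ (n := m)]
      simp

lemma walk_support_eq {u v : V} (w : G.Walk u v) :
    w.support = (List.range (w.length+1)).map w.getVert := by
  induction w with
  | nil => simp [show List.range 1 = [0] from rfl]
  | cons h p ih =>
      rw [Walk.support_cons, ih, Walk.length_cons]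
      conv_rhs => rw [List.range_succ_eq_map]
      simp [List.map_map, Function.comp_def, Walk.getVert_cons_succ]

lemma walk_edges_eq {u v : V} (w : G.Walk u v) :
    w.edges = (List.range w.length).map (fun i => s(w.getVert i, w.getVert (i+1))) := by
  induction w with
  | nil => simp
  | cons h p ih =>
      rw [Walk.edges_cons, ih, Walk.length_cons]
      conv_rhs => rw [List.range_succ_eq_map]
      simp only [List.map_map, Function.comp_def, Walk.getVert_cons_succ, List.map_cons,
        Walk.getVert_zero, Nat.succ_eq_add_one]

/-- Rotation lemma: if `σ` is an involution of `{0,…,length}` such that consecutive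
`σ`-images are adjacent, then the resulting hamiltonian path's edges all lie in `w.edges`
(by unique traceability). -/
lemma rot [DecidableEq V] [Fintype V] {u0 v0 : V} (w : G.Walk u0 v0)
    (hw : w.IsHamiltonian)
    (huniq : ∀ (a b : V) (q : G.Walk a b), q.IsHamiltonian → ∀ e, e ∈ q.edges → e ∈ w.edges)
    (σ : ℕ → ℕ) (hinv : ∀ k, k ≤ w.length → σ (σ k) = k ∧ σ k ≤ w.length)
    (hadj : ∀ k, k < w.length → G.Adj (w.getVert (σ k)) (w.getVert (σ (k+1)))) :
    ∀ k, k < w.length → s(w.getVert (σ k), w.getVert (σ (k+1))) ∈ w.edges := by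
  intro k hk
  set m := w.length with hm
  set f : ℕ → V := fun i => w.getVert (σ i) with hf
  -- injectivity of getVert on [0, m]
  have hVinj : ∀ i, i ≤ m → ∀ j, j ≤ m → w.getVert i = w.getVert j → i = j := by
    intro i hi j hj hij
    have hnd : w.support.Nodup := hw.isPath.support_nodup
    rw [walk_support_eq] at hnd
    exact List.inj_on_of_nodup_map hnd (List.mem_range.mpr (by omega)) (List.mem_range.mpr (by omega)) hij
  have hQadj : ∀ k, k < m → G.Adj (f k) (f (k+1)) := hadj
  let Q : G.Walk (f 0) (f m) := buildWalk G f m hQadj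
  have hQsupp : Q.support = (List.range (m+1)).map f := buildWalk_support f m hQadj
  have hQpath : Q.IsPath := by
    apply Walk.IsPath.mk'
    rw [hQsupp]
    refine List.Nodup.map_on ?_ List.nodup_range
    intro x hx y hy hxy
    simp only [List.mem_range] at hx hy
    have hx' : x ≤ m := by omega
    have hy' : y ≤ m := by omega
    have := hVinj _ (hinv x hx').2 _ (hinv y hy').2 hxy
    have hx2 := (hinv x hx').1
    have hy2 := (hinv y hy').1
    rw [← hx2, ← hy2, this]
  have hQham : Q.IsHamiltonian := by
    apply hQpath.isHamiltonian_of_mem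
    intro x
    have hx : x ∈ w.support := hw.mem_support x
    rw [walk_support_eq] at hx
    obtain ⟨i, hi, rfl⟩ := List.mem_map.mp hx
    simp only [List.mem_range] at hi
    have hi' : i ≤ m := by omega
    rw [hQsupp]
    refine List.mem_map.mpr ⟨σ i, ?_, ?_⟩
    · simp only [List.mem_range]
      have := (hinv i hi').2
      omega
    · simp only [hf, (hinv i hi').1]
  have hQe : Q.edges = (List.range m).map (fun k => s(f k, f (k+1))) := buildWalk_edges f m hQadj
  apply huniq _ _ Q hQham
  rw [hQe]
  exact List.mem_map.mpr ⟨k, by simpa using hk, rfl⟩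


/-- Sets with no two consecutive elements inside `[1, L]` have at most `(L+1)/2` elements. -/
lemma gapBound (L : ℕ) (A : Finset ℕ) (hsub : A ⊆ Finset.Icc 1 L)
    (hgap : ∀ i ∈ A, i + 1 ∉ A) : A.card ≤ (L + 1) / 2 := by
  have : A.card ≤ (Finset.range ((L+1)/2)).card := by
    apply Finset.card_le_card_of_injOn (fun i => (i - 1) / 2)
    · intro i hi
      have := Finset.mem_Icc.mp (hsub hi)
      simp only [Finset.mem_coe, Finset.mem_range]
      omega
    · intro i hi j hj hij
      have hij' : (i-1)/2 = (j-1)/2 := hij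
      clear hij
      by_contra hne
      rcases Nat.lt_or_ge i j with h | h
      · have : j ≠ i + 1 := fun he => hgap i hi (he ▸ hj)
        have h2 : i + 2 ≤ j := by omega
        have := Finset.mem_Icc.mp (hsub hi)
        omega
      · have hlt : j < i := by omega
        have : i ≠ j + 1 := fun he => hgap j hj (he ▸ hi)
        have h2 : j + 2 ≤ i := by omega
        have := Finset.mem_Icc.mp (hsub hj)
        omega
  simpa using this

lemma sq_helper1 (s : ℕ) : (2*s)^2/4 = s*s := by
  rw [show (2*s)^2 = 4*(s*s) by ring]
  omega

lemma sq_helper2 (s : ℕ) : (2*s+1)^2/4 = s*s + s := by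
  rw [show (2*s+1)^2 = 4*(s*s) + (4*s+1) by ring]
  have : (4*(s*s) + (4*s+1))/4 = s*s + (4*s+1)/4 := by
    generalize s*s = a
    omega
  rw [this]
  omega

lemma step_arith (M : ℕ) : (M-1)^2/4 + M/2 = M^2/4 := by
  rcases Nat.even_or_odd' M with ⟨t, ht | ht⟩ <;> subst ht
  · rcases Nat.eq_zero_or_pos t with rfl | hpos
    · simp
    · obtain ⟨s, rfl⟩ : ∃ s, t = s + 1 := ⟨t - 1, by omega⟩
      rw [show 2*(s+1) - 1 = 2*s+1 by omega, sq_helper2, show 2*(s+1) = 2*(s+1) from rfl,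
        sq_helper1]
      have h2 : 2*(s+1)/2 = s+1 := by omega
      rw [h2]
      ring
  · rw [show 2*t+1-1 = 2*t by omega, sq_helper1, sq_helper2]
    have h2 : (2*t+1)/2 = t := by omega
    rw [h2]

lemma sumDivTwo (M : ℕ) : (Finset.range M).sum (fun k => k/2) = (M-1)^2/4 := by
  induction M with
  | zero => simp
  | succ M ih =>
      rw [Finset.sum_range_succ, ih, Nat.add_sub_cancel, step_arith]

lemma final_arith (m : ℕ) : m + (m-2)^2/4 ≤ m^2/4 + 1 := by
  rcases Nat.lt_or_ge m 2 with h | h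
  · interval_cases m <;> simp
  · obtain ⟨t, rfl⟩ : ∃ t, m = t + 2 := ⟨m - 2, by omega⟩
    rw [Nat.add_sub_cancel]
    rcases Nat.even_or_odd t with ⟨s, hs⟩ | ⟨s, hs⟩
    · subst hs
      rw [show s+s = 2*s from by ring, sq_helper1, show 2*s+2 = 2*(s+1) by ring, sq_helper1]
      nlinarith
    · subst hs
      rw [sq_helper2, show 2*s+1+2 = 2*(s+1)+1 by ring, sq_helper2]
      nlinarith

/-- The combinatorial counting bound. -/
lemma countBound (m : ℕ) (T : Finset (ℕ × ℕ))
    (h0 : ∀ p ∈ T, p.1 < p.2 ∧ p.2 ≤ m)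
    (h1 : ∀ p ∈ T, p.1 + 2 ≤ p.2 → 1 ≤ p.1 ∧ p.2 + 1 ≤ m)
    (h2 : ∀ p ∈ T, p.1 + 2 ≤ p.2 → (p.1 + 1, p.2 + 1) ∉ T) :
    T.card ≤ m^2/4 + 1 := by
  classical
  set T1 := T.filter (fun p => p.2 = p.1 + 1) with hT1
  set T2 := T.filter (fun p => p.1 + 2 ≤ p.2) with hT2
  have hcard : T.card ≤ T1.card + T2.card := by
    rw [← Finset.card_union_of_disjoint]
    · apply Finset.card_le_card
      intro p hp
      have := (h0 p hp).1
      rcases Nat.lt_or_ge (p.1 + 1) p.2 with h | h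
      · exact Finset.mem_union_right _ (Finset.mem_filter.mpr ⟨hp, by omega⟩)
      · exact Finset.mem_union_left _ (Finset.mem_filter.mpr ⟨hp, by omega⟩)
    · rw [Finset.disjoint_left]
      intro p hp1 hp2
      rw [Finset.mem_filter] at hp1 hp2
      omega
  have hc1 : T1.card ≤ m := by
    have : T1.card ≤ (Finset.range m).card := by
      apply Finset.card_le_card_of_injOn Prod.fst
      · intro p hp
        rw [Finset.mem_coe, Finset.mem_filter] at hp
        have := h0 p hp.1
        simp only [Finset.mem_coe, Finset.mem_range]
        omega
      · intro p hp q hq hpq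
        rw [Finset.mem_coe, Finset.mem_filter] at hp hq
        have : p.2 = q.2 := by omega
        exact Prod.ext hpq this
    simpa using this
  have hc2 : T2.card ≤ (m-2)^2/4 := by
    have hfib : T2.card = ∑ d ∈ Finset.Icc 2 m,
        (T2.filter (fun p => p.2 - p.1 = d)).card := by
      apply Finset.card_eq_sum_card_fiberwise
      intro p hp
      rw [Finset.mem_coe, Finset.mem_filter] at hp
      have := h0 p hp.1
      simp only [Finset.mem_coe, Finset.mem_Icc]
      omega
    rw [hfib]
    have hbound : ∀ d ∈ Finset.Icc 2 m,
        (T2.filter (fun p => p.2 - p.1 = d)).card ≤ (m-d)/2 := by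
      intro d hd
      rw [Finset.mem_Icc] at hd
      set F := T2.filter (fun p => p.2 - p.1 = d) with hF
      have hmem : ∀ p ∈ F, p ∈ T ∧ p.1 + d = p.2 ∧ 1 ≤ p.1 ∧ p.2 + 1 ≤ m := by
        intro p hp
        rw [hF, Finset.mem_filter, Finset.mem_filter] at hp
        obtain ⟨⟨hpT, hp2⟩, hpd⟩ := hp
        have := h1 p hpT (by omega)
        exact ⟨hpT, by omega, this⟩
      have hcardA : F.card = (F.image Prod.fst).card := by
        rw [Finset.card_image_of_injOn]
        intro p hp q hq hpq
        rw [Finset.mem_coe] at hp hq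
        have h1' := hmem p hp
        have h2' := hmem q hq
        exact Prod.ext hpq (by omega)
      rw [hcardA]
      have := gapBound (m - 1 - d) (F.image Prod.fst) ?_ ?_
      · omega
      · intro i hi
        obtain ⟨p, hp, rfl⟩ := Finset.mem_image.mp hi
        have := hmem p hp
        rw [Finset.mem_Icc]
        omega
      · intro i hi hi1
        obtain ⟨p, hp, hpi⟩ := Finset.mem_image.mp hi
        obtain ⟨q, hq, hqi⟩ := Finset.mem_image.mp hi1
        have hp' := hmem p hp
        have hq' := hmem q hq
        have hpe : p = (i, i + d) := Prod.ext hpi (by omega)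
        have hqe : q = (i+1, i+1+d) := Prod.ext hqi (by omega)
        apply h2 p hp'.1 (by omega)
        rw [hpe] at hp' ⊢
        rw [hqe] at hq'
        simpa [show i+d+1 = i+1+d by omega] using hq'.1
    calc ∑ d ∈ Finset.Icc 2 m, (T2.filter (fun p => p.2 - p.1 = d)).card
        ≤ ∑ d ∈ Finset.Icc 2 m, (m-d)/2 := Finset.sum_le_sum hbound
      _ = ∑ k ∈ Finset.range (m-1), k/2 := by
          apply Finset.sum_nbij' (fun d => m - d) (fun k => m - k)
          · intro d hd
            rw [Finset.mem_Icc] at hd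
            rw [Finset.mem_range]
            omega
          · intro k hk
            rw [Finset.mem_range] at hk
            rw [Finset.mem_Icc]
            omega
          · intro d hd
            rw [Finset.mem_Icc] at hd
            omega
          · intro k hk
            rw [Finset.mem_range] at hk
            omega
          · intro d hd
            rfl
      _ = ((m-1)-1)^2/4 := sumDivTwo (m-1)
      _ = (m-2)^2/4 := by rw [show m-1-1 = m-2 by omega]
  calc T.card ≤ T1.card + T2.card := hcard
    _ ≤ m + (m-2)^2/4 := Nat.add_le_add hc1 hc2
    _ ≤ m^2/4 + 1 := final_arith m

section
variable [DecidableEq V] [Fintype V] {u0 v0 : V} (w : G.Walk u0 v0)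

lemma getVert_inj (hw : w.IsPath) :
    ∀ i, i ≤ w.length → ∀ j, j ≤ w.length → w.getVert i = w.getVert j → i = j := by
  intro i hi j hj hij
  have hnd : w.support.Nodup := hw.support_nodup
  rw [walk_support_eq] at hnd
  exact List.inj_on_of_nodup_map hnd (List.mem_range.mpr (by omega))
    (List.mem_range.mpr (by omega)) hij

lemma edge_ne (hw : w.IsPath) :
    ∀ i j, i ≤ w.length → j ≤ w.length → s(w.getVert i, w.getVert j) ∈ w.edges →
      j = i + 1 ∨ i = j + 1 := by
  intro i j hi hj he
  rw [walk_edges_eq] at he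
  obtain ⟨k, hk, hke⟩ := List.mem_map.mp he
  rw [List.mem_range] at hk
  rw [Sym2.eq_iff] at hke
  rcases hke with ⟨h1, h2⟩ | ⟨h1, h2⟩
  · have e1 := getVert_inj w hw k (by omega) i hi h1
    have e2 := getVert_inj w hw (k+1) (by omega) j hj h2
    omega
  · have e1 := getVert_inj w hw k (by omega) j hj h1
    have e2 := getVert_inj w hw (k+1) (by omega) i hi h2
    omega

variable (hw : w.IsHamiltonian)
  (huniq : ∀ (a b : V) (q : G.Walk a b), q.IsHamiltonian → ∀ e, e ∈ q.edges → e ∈ w.edges)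

include hw huniq

lemma keyA : ∀ j, 2 ≤ j → j ≤ w.length → ¬ G.Adj (w.getVert 0) (w.getVert j) := by
  intro j hj2 hjm hadjc
  have hadjw : ∀ k, k < w.length → G.Adj (w.getVert k) (w.getVert (k+1)) :=
    fun k hk => w.adj_getVert_succ hk
  set σ : ℕ → ℕ := fun k => if k < j then j - 1 - k else k with hσ
  have hσval : ∀ k, (k < j → σ k = j - 1 - k) ∧ (j ≤ k → σ k = k) := by
    intro k
    constructor <;> (intro h; simp only [hσ]; split_ifs <;> omega)
  have hinv : ∀ k, k ≤ w.length → σ (σ k) = k ∧ σ k ≤ w.length := by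
    intro k hk
    constructor <;> (simp only [hσ]; split_ifs <;> omega)
  have hadjσ : ∀ k, k < w.length → G.Adj (w.getVert (σ k)) (w.getVert (σ (k+1))) := by
    intro k hk
    rcases Nat.lt_or_ge (k+1) j with h1 | h1
    · rw [(hσval k).1 (by omega), (hσval (k+1)).1 h1,
        show j - 1 - k = (j - 1 - (k+1)) + 1 by omega]
      exact (hadjw _ (by omega)).symm
    · rcases Nat.lt_or_ge k j with h2 | h2
      · -- k = j - 1
        rw [(hσval k).1 h2, (hσval (k+1)).2 (by omega),
          show j - 1 - k = 0 by omega, show k + 1 = j by omega]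
        exact hadjc
      · rw [(hσval k).2 h2, (hσval (k+1)).2 (by omega)]
        exact hadjw k hk
  have hres := rot w hw huniq σ hinv hadjσ (j-1) (by omega)
  rw [(hσval (j-1)).1 (by omega), show j - 1 + 1 = j by omega, (hσval j).2 le_rfl,
    show j - 1 - (j-1) = 0 by omega] at hres
  have := edge_ne w hw.isPath 0 j (by omega) hjm hres
  omega

lemma keyC : ∀ i, i + 2 ≤ w.length → ¬ G.Adj (w.getVert i) (w.getVert w.length) := by
  intro i him hadjc
  have hadjw : ∀ k, k < w.length → G.Adj (w.getVert k) (w.getVert (k+1)) :=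
    fun k hk => w.adj_getVert_succ hk
  set m := w.length with hm
  set σ : ℕ → ℕ := fun k => if k ≤ i then k else m + i + 1 - k with hσ
  have hσval : ∀ k, (k ≤ i → σ k = k) ∧ (i < k → σ k = m + i + 1 - k) := by
    intro k
    constructor <;> (intro h; simp only [hσ]; split_ifs <;> omega)
  have hinv : ∀ k, k ≤ m → σ (σ k) = k ∧ σ k ≤ m := by
    intro k hk
    constructor <;> (simp only [hσ]; split_ifs <;> omega)
  have hadjσ : ∀ k, k < m → G.Adj (w.getVert (σ k)) (w.getVert (σ (k+1))) := by
    intro k hk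
    rcases Nat.lt_or_ge k i with h1 | h1
    · rw [(hσval k).1 (by omega), (hσval (k+1)).1 (by omega)]
      exact hadjw k hk
    · rcases Nat.eq_or_lt_of_le h1 with h2 | h2
      · rw [(hσval k).1 (by omega), (hσval (k+1)).2 (by omega),
          show m + i + 1 - (k+1) = m by omega, ← h2]
        exact hadjc
      · rw [(hσval k).2 h2, (hσval (k+1)).2 (by omega),
          show m + i + 1 - k = (m + i - k) + 1 by omega,
          show m + i + 1 - (k+1) = m + i - k by omega]
        exact (hadjw _ (by omega)).symm
  have hres := rot w hw huniq σ hinv hadjσ i (by omega)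
  rw [(hσval i).1 le_rfl, (hσval (i+1)).2 (by omega),
    show m + i + 1 - (i+1) = m by omega] at hres
  have := edge_ne w hw.isPath i m (by omega) le_rfl hres
  omega

lemma keyB : ∀ i j, i + 2 ≤ j → j + 1 ≤ w.length →
    G.Adj (w.getVert i) (w.getVert j) →
    ¬ G.Adj (w.getVert (i+1)) (w.getVert (j+1)) := by
  intro i j hij hjm hadj1 hadj2
  have hadjw : ∀ k, k < w.length → G.Adj (w.getVert k) (w.getVert (k+1)) :=
    fun k hk => w.adj_getVert_succ hk
  set σ : ℕ → ℕ := fun k => if k ≤ i then k else if k ≤ j then i + j + 1 - k else k with hσ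
  have hσval : ∀ k, (k ≤ i → σ k = k) ∧ (i < k → k ≤ j → σ k = i + j + 1 - k) ∧
      (j < k → σ k = k) := by
    intro k
    refine ⟨?_, ?_, ?_⟩ <;> (intro h; try intro h') <;>
      (simp only [hσ]; split_ifs <;> omega)
  have hinv : ∀ k, k ≤ w.length → σ (σ k) = k ∧ σ k ≤ w.length := by
    intro k hk
    constructor <;> (simp only [hσ]; split_ifs <;> omega)
  have hadjσ : ∀ k, k < w.length → G.Adj (w.getVert (σ k)) (w.getVert (σ (k+1))) := by
    intro k hk
    rcases Nat.lt_or_ge k i with h1 | h1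
    · rw [(hσval k).1 (by omega), (hσval (k+1)).1 (by omega)]
      exact hadjw k hk
    · rcases Nat.eq_or_lt_of_le h1 with h2 | h2
      · -- k = i
        rw [(hσval k).1 (by omega), (hσval (k+1)).2.1 (by omega) (by omega),
          show i + j + 1 - (k+1) = j by omega, ← h2]
        exact hadj1
      · rcases Nat.lt_or_ge k j with h3 | h3
        · rw [(hσval k).2.1 h2 (by omega), (hσval (k+1)).2.1 (by omega) (by omega),
            show i + j + 1 - k = (i + j - k) + 1 by omega,
            show i + j + 1 - (k+1) = i + j - k by omega]
          exact (hadjw _ (by omega)).symm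
        · rcases Nat.eq_or_lt_of_le h3 with h4 | h4
          · -- k = j
            rw [(hσval k).2.1 h2 (by omega), (hσval (k+1)).2.2 (by omega),
              show i + j + 1 - k = i + 1 by omega, ← h4]
            exact hadj2
          · rw [(hσval k).2.2 h4, (hσval (k+1)).2.2 (by omega)]
            exact hadjw k hk
  have hres := rot w hw huniq σ hinv hadjσ i (by omega)
  rw [(hσval i).1 le_rfl, (hσval (i+1)).2.1 (by omega) (by omega),
    show i + j + 1 - (i+1) = j by omega] at hres
  have := edge_ne w hw.isPath i j (by omega) (by omega) hres
  omega

end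

end UT15

theorem stmt15 {V : Type*} [Fintype V] (G : SimpleGraph V) (hn : 2 ≤ Fintype.card V)
    (hut : hamPathCount G = 1) :
    G.edgeSet.ncard ≤ (Fintype.card V - 1) ^ 2 / 4 + 1 := by
  letI := Classical.decEq V
  obtain ⟨s, hs⟩ := Set.ncard_eq_one.mp hut
  have hsmem : s ∈ hamPathSets G := hs ▸ Set.mem_singleton s
  obtain ⟨a, b, w, hw, hws⟩ := hsmem
  have huniq : ∀ (a' b' : V) (q : G.Walk a' b'), q.IsHamiltonian →
      ∀ e, e ∈ q.edges → e ∈ w.edges := by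
    intro a' b' q hq e he
    have hq' : {e | e ∈ q.edges} ∈ hamPathSets G := ⟨a', b', q, hq, rfl⟩
    rw [hs, Set.mem_singleton_iff] at hq'
    have h2 : {e | e ∈ q.edges} = {e | e ∈ w.edges} := hq'.trans hws.symm
    exact (Set.ext_iff.mp h2 e).mp he
  have hm : w.length = Fintype.card V - 1 := hw.length_eq
  -- surjectivity of getVert
  have hVsurj : ∀ x : V, ∃ i, i ≤ w.length ∧ w.getVert i = x := by
    intro x
    have hx : x ∈ w.support := hw.mem_support x
    rw [UT15.walk_support_eq] at hx
    obtain ⟨i, hi, hxi⟩ := List.mem_map.mp hx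
    have := List.mem_range.mp hi
    exact ⟨i, by omega, hxi⟩
  -- every edge is indexed by a pair
  have hidx : ∀ e ∈ G.edgeSet, ∃ p : ℕ × ℕ,
      p.1 < p.2 ∧ p.2 ≤ w.length ∧ e = s(w.getVert p.1, w.getVert p.2) := by
    intro e he
    induction e with
    | _ x y =>
      rw [mem_edgeSet] at he
      obtain ⟨i, hi, rfl⟩ := hVsurj x
      obtain ⟨j, hj, rfl⟩ := hVsurj y
      have hne : i ≠ j := fun h => G.ne_of_adj he (by rw [h])
      rcases Nat.lt_or_ge i j with h | h
      · exact ⟨(i, j), h, hj, rfl⟩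
      · exact ⟨(j, i), by omega, hi, Sym2.eq_swap⟩
  classical
  set F : Sym2 V → ℕ × ℕ := fun e =>
    if h : ∃ p : ℕ × ℕ, p.1 < p.2 ∧ p.2 ≤ w.length ∧ e = s(w.getVert p.1, w.getVert p.2)
    then h.choose else (0,0) with hFdef
  have hF : ∀ e ∈ G.edgeSet, (F e).1 < (F e).2 ∧ (F e).2 ≤ w.length ∧
      e = s(w.getVert (F e).1, w.getVert (F e).2) := by
    intro e he
    have h := hidx e he
    simp only [hFdef, dif_pos h]
    exact h.choose_spec
  have hfin : G.edgeSet.Finite := Set.toFinite _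
  set T : Finset (ℕ × ℕ) := hfin.toFinset.image F with hTdef
  have hTmem : ∀ p ∈ T, ∃ e ∈ G.edgeSet, F e = p := by
    intro p hp
    obtain ⟨e, he, hfe⟩ := Finset.mem_image.mp hp
    exact ⟨e, (Set.Finite.mem_toFinset hfin).mp he, hfe⟩
  have hT0 : ∀ p ∈ T, p.1 < p.2 ∧ p.2 ≤ w.length ∧ G.Adj (w.getVert p.1) (w.getVert p.2) := by
    intro p hp
    obtain ⟨e, he, rfl⟩ := hTmem p hp
    obtain ⟨h1, h2, h3⟩ := hF e he
    refine ⟨h1, h2, ?_⟩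
    rw [← mem_edgeSet, ← h3]
    exact he
  have hcard : G.edgeSet.ncard = T.card := by
    rw [hTdef, Finset.card_image_of_injOn, Set.ncard_eq_toFinset_card _ hfin]
    intro e he e' he' hee
    rw [Finset.mem_coe, Set.Finite.mem_toFinset] at he he'
    have h3 := (hF e he).2.2
    have h3' := (hF e' he').2.2
    rw [h3, h3', hee]
  rw [hcard, ← hm]
  apply UT15.countBound w.length T
  · intro p hp
    exact ⟨(hT0 p hp).1, (hT0 p hp).2.1⟩
  · intro p hp hd
    obtain ⟨h1, h2, h3⟩ := hT0 p hp
    constructor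
    · by_contra h
      exact UT15.keyA w hw huniq p.2 (by omega) h2 (by
        rwa [show p.1 = 0 by omega] at h3)
    · by_contra h
      exact UT15.keyC w hw huniq p.1 (by omega) (by
        rwa [show p.2 = w.length by omega] at h3)
  · intro p hp hd hp'
    obtain ⟨h1, h2, h3⟩ := hT0 p hp
    obtain ⟨h1', h2', h3'⟩ := hT0 _ hp'
    exact UT15.keyB w hw huniq p.1 p.2 hd (by simpa using h2') h3 (by simpa using h3')
end

section
/- For every n ≥ 2 and every integer m with n − 1 ≤ m ≤ ⌊(n − 1)²/4⌋ + 1, there exists a uniquely traceable graph of order n with exactly m edges. -/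
open SimpleGraph

set_option maxHeartbeats 1000000

namespace UT

variable {V : Type*} {G : SimpleGraph V}

lemma mem_edges_iff_getVert {u v : V} (w : G.Walk u v) (e : Sym2 V) :
    e ∈ w.edges ↔ ∃ i, i < w.length ∧ e = s(w.getVert i, w.getVert (i+1)) := by
  induction w with
  | nil => simp
  | @cons a b c h p ih =>
      simp only [Walk.edges_cons, List.mem_cons, ih, Walk.length_cons]
      constructor
      · rintro (rfl | ⟨i, hi, rfl⟩)
        · exact ⟨0, by omega, by simp [Walk.getVert_cons_succ]⟩
        · exact ⟨i+1, by omega, by simp [Walk.getVert_cons_succ]⟩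
      · rintro ⟨i, hi, rfl⟩
        match i with
        | 0 => left; simp [Walk.getVert_cons_succ]
        | (i+1) => right; exact ⟨i, by omega, by simp [Walk.getVert_cons_succ]⟩

lemma getVert_mem_support' {u v : V} (w : G.Walk u v) (i : ℕ) : w.getVert i ∈ w.support := by
  rcases le_or_gt i w.length with h | h
  · exact Walk.mem_support_iff_exists_getVert.mpr ⟨i, rfl, h⟩
  · rw [Walk.getVert_of_length_le w (le_of_lt h)]; exact Walk.end_mem_support w

lemma getVert_inj {u v : V} (w : G.Walk u v) (hnd : w.support.Nodup) :
    ∀ s, s ≤ w.length → ∀ t, t ≤ w.length → w.getVert s = w.getVert t → s = t := by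
  induction w with
  | nil => intro s hs t ht _; simp [Walk.length_nil] at hs ht; omega
  | @cons a b c h p ih =>
      rw [Walk.support_cons, List.nodup_cons] at hnd
      intro s hs t ht heq
      match s, t with
      | 0, 0 => rfl
      | 0, (t+1) =>
          exfalso; apply hnd.1
          rw [Walk.getVert_zero, Walk.getVert_cons_succ] at heq
          rw [heq]; exact getVert_mem_support' p t
      | (s+1), 0 =>
          exfalso; apply hnd.1
          rw [Walk.getVert_zero, Walk.getVert_cons_succ] at heq
          rw [← heq]; exact getVert_mem_support' p s
      | (s+1), (t+1) =>
          rw [Walk.getVert_cons_succ, Walk.getVert_cons_succ] at heq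
          have := ih hnd.2 s (by simpa [Nat.succ_le_succ_iff] using hs) t
            (by simpa [Nat.succ_le_succ_iff] using ht) heq
          omega

end UT
namespace UT

def UG (n : ℕ) (S : Finset (ℕ × ℕ)) : SimpleGraph (Fin n) where
  Adj u v := u ≠ v ∧ (u.val+1 = v.val ∨ v.val+1 = u.val ∨ (u.val, v.val) ∈ S ∨ (v.val, u.val) ∈ S)
  symm := by constructor; rintro u v ⟨h1, h2⟩; exact ⟨h1.symm, by tauto⟩
  loopless := by constructor; rintro u ⟨h1, -⟩; exact h1 rfl

def Good (n : ℕ) (S : Finset (ℕ × ℕ)) : Prop :=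
  ∀ p ∈ S, p.1 % 2 = 1 ∧ p.1 + 2 ≤ p.2 ∧ p.2 + 2 ≤ n

variable {n : ℕ} {S : Finset (ℕ × ℕ)}

lemma adj_class (hS : Good n S) {u v : Fin n} (h : (UG n S).Adj u v) :
    u.val+1 = v.val ∨ v.val+1 = u.val ∨
    (u.val % 2 = 1 ∧ u.val + 2 ≤ v.val ∧ v.val + 2 ≤ n) ∨
    (v.val % 2 = 1 ∧ v.val + 2 ≤ u.val ∧ u.val + 2 ≤ n) := by
  obtain ⟨-, h⟩ := h
  rcases h with h | h | h | h
  · exact Or.inl h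
  · exact Or.inr (Or.inl h)
  · exact Or.inr (Or.inr (Or.inl (hS _ h)))
  · exact Or.inr (Or.inr (Or.inr (hS _ h)))

lemma length_ham {u v : Fin n} (w : (UG n S).Walk u v)
    (hnd : w.support.Nodup) (hall : ∀ a, a ∈ w.support) : w.length = n - 1 := by
  have h2 : w.support.toFinset = Finset.univ := by
    ext a; simp [hall a]
  have h3 := List.toFinset_card_of_nodup hnd
  rw [h2] at h3
  simp only [Finset.card_univ, Fintype.card_fin] at h3
  have h4 := w.length_support
  omega

lemma forcing (hn : 2 ≤ n) (hS : Good n S) {u v : Fin n} (w : (UG n S).Walk u v)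
    (hnd : w.support.Nodup) (hall : ∀ a, a ∈ w.support) (h0 : (w.getVert 0).val = 0) :
    ∀ t ≤ w.length, (w.getVert t).val = t := by
  have hL : w.length = n - 1 := length_ham w hnd hall
  have hinj := getVert_inj w hnd
  have hsurj : ∀ x : Fin n, ∃ t, t ≤ w.length ∧ w.getVert t = x := by
    intro x
    obtain ⟨t, h1, h2⟩ := Walk.mem_support_iff_exists_getVert.mp (hall x)
    exact ⟨t, h2, h1⟩
  intro t
  induction t using Nat.strong_induction_on with
  | _ t IH =>
    intro ht
    rcases t with _ | k
    · exact h0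
    · have hbig : ∀ p, p ≤ w.length → k+1 ≤ p → k+1 ≤ (w.getVert p).val := by
        intro p hp hkp
        by_contra hlt
        push_neg at hlt
        have h1 := IH (w.getVert p).val (by omega) (by omega)
        have h2 := hinj (w.getVert p).val (by omega) p hp (Fin.ext h1)
        omega
      rcases Nat.lt_or_ge (k+1) w.length with hlt | hge
      · -- interior position
        have hk : (w.getVert k).val = k := IH k (by omega) (by omega)
        have hadj := w.adj_getVert_succ (show k < w.length by omega)
        have hcls := adj_class hS hadj
        rw [hk] at hcls
        have hx1 : k+1 ≤ (w.getVert (k+1)).val := hbig (k+1) ht (le_refl _)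
        by_contra hne
        have hxlt := (w.getVert (k+1)).isLt
        have hx2 : k+2 ≤ (w.getVert (k+1)).val := by omega
        rcases eq_or_ne (k % 2) 0 with hpar | hpar
        · omega
        · -- k odd
          have hk1n : k + 1 < n - 1 := by omega
          obtain ⟨r, hrL, hrz⟩ := hsurj ⟨k+1, by omega⟩
          have hzval : (w.getVert r).val = k+1 := by rw [hrz]
          have hrge : k+2 ≤ r := by
            rcases Nat.lt_or_ge r (k+1) with h | h
            · have := IH r (by omega) (by omega); omega
            · rcases eq_or_ne r (k+1) with h' | h'
              · rw [h'] at hzval; omega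
              · omega
          rcases eq_or_ne r w.length with hreq | hrneq
          · -- r = length: use vertex n-1
            obtain ⟨q, hqL, hqe⟩ := hsurj ⟨n-1, by omega⟩
            have hqval : (w.getVert q).val = n-1 := by rw [hqe]
            have hq1 : k+1 ≤ q := by
              by_contra hc; push_neg at hc
              have := IH q (by omega) (by omega); omega
            have hq2 : q ≠ k+1 := by
              intro h'
              rw [h'] at hqval
              omega
            have hq3 : q ≠ w.length := by
              intro h'
              rw [h', ← hreq] at hqval
              omega
            have ha1 := w.adj_getVert_succ (show q - 1 < w.length by omega)
            rw [show q - 1 + 1 = q by omega] at ha1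
            have ha2 := w.adj_getVert_succ (show q < w.length by omega)
            have hc1 := adj_class hS ha1
            have hc2 := adj_class hS ha2
            rw [hqval] at hc1 hc2
            have i1 := (w.getVert (q-1)).isLt
            have i2 := (w.getVert (q+1)).isLt
            have : q - 1 = q + 1 := by
              refine hinj (q-1) (by omega) (q+1) (by omega) (Fin.ext ?_)
              generalize (w.getVert (q-1)).val = y1 at hc1 i1 ⊢
              generalize (w.getVert (q+1)).val = y2 at hc2 i2 ⊢
              clear hcls hbig IH hinj hsurj hzval hrz ha1 ha2 hqval hqe
              omega
            omega
          · -- r < length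
            have ha1 := w.adj_getVert_succ (show r - 1 < w.length by omega)
            rw [show r - 1 + 1 = r by omega] at ha1
            have ha2 := w.adj_getVert_succ (show r < w.length by omega)
            have hc1 := adj_class hS ha1
            have hc2 := adj_class hS ha2
            rw [hzval] at hc1 hc2
            have b1 : k+1 ≤ (w.getVert (r-1)).val := hbig _ (by omega) (by omega)
            have b2 : k+1 ≤ (w.getVert (r+1)).val := hbig _ (by omega) (by omega)
            have ne1 : (w.getVert (r-1)).val ≠ k+1 := by
              intro hcq
              have : r - 1 = r := hinj _ (by omega) _ (by omega) (Fin.ext (by omega))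
              omega
            have ne2 : (w.getVert (r+1)).val ≠ k+1 := by
              intro hcq
              have : r + 1 = r := hinj _ (by omega) _ (by omega) (Fin.ext (by omega))
              omega
            have : r - 1 = r + 1 := by
              refine hinj _ (by omega) _ (by omega) (Fin.ext ?_)
              generalize (w.getVert (r-1)).val = y1 at b1 ne1 hc1 ⊢
              generalize (w.getVert (r+1)).val = y2 at b2 ne2 hc2 ⊢
              clear hcls hbig IH hinj hsurj hzval hrz ha1 ha2
              omega
            omega
      · -- last position
        have h1 := hbig (k+1) ht (le_refl _)
        have h2 := (w.getVert (k+1)).isLt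
        omega
def stdSet (n : ℕ) : Set (Sym2 (Fin n)) := {e | ∃ a b : Fin n, a.val + 1 = b.val ∧ e = s(a, b)}

lemma edges_eq_std_aux (hn : 2 ≤ n) (hS : Good n S) {u v : Fin n} (w : (UG n S).Walk u v)
    (hnd : w.support.Nodup) (hall : ∀ a, a ∈ w.support) (h0 : (w.getVert 0).val = 0) :
    {e | e ∈ w.edges} = stdSet n := by
  have hL : w.length = n - 1 := length_ham w hnd hall
  have hF := forcing hn hS w hnd hall h0
  ext e
  simp only [Set.mem_setOf_eq, mem_edges_iff_getVert, stdSet]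
  constructor
  · rintro ⟨i, hi, rfl⟩
    exact ⟨w.getVert i, w.getVert (i+1), by rw [hF i (by omega), hF (i+1) (by omega)], rfl⟩
  · rintro ⟨a, b, hab, rfl⟩
    have hbl := b.isLt
    refine ⟨a.val, by omega, ?_⟩
    have h1 : w.getVert a.val = a := Fin.ext (hF a.val (by omega))
    have h2 : w.getVert (a.val+1) = b := Fin.ext (by rw [hF (a.val+1) (by omega)]; omega)
    rw [h1, h2]

lemma edges_eq_std (hn : 2 ≤ n) (hS : Good n S) {u v : Fin n} (w : (UG n S).Walk u v)
    (hnd : w.support.Nodup) (hall : ∀ a, a ∈ w.support) :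
    {e | e ∈ w.edges} = stdSet n := by
  have hL : w.length = n - 1 := length_ham w hnd hall
  have hinj := getVert_inj w hnd
  obtain ⟨t₀, ht₀, ht₀L⟩ := Walk.mem_support_iff_exists_getVert.mp (hall ⟨0, by omega⟩)
  have ht₀v : (w.getVert t₀).val = 0 := by rw [ht₀]
  rcases eq_or_ne t₀ 0 with h | h
  · exact edges_eq_std_aux hn hS w hnd hall (h ▸ ht₀v)
  · rcases eq_or_ne t₀ w.length with hEnd | hMid
    · -- reversed walk
      have hndr : w.reverse.support.Nodup := by
        rw [Walk.support_reverse]; exact List.nodup_reverse.mpr hnd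
      have hallr : ∀ a, a ∈ w.reverse.support := by
        intro a; rw [Walk.support_reverse, List.mem_reverse]; exact hall a
      have h0r : (w.reverse.getVert 0).val = 0 := by
        rw [Walk.getVert_reverse, Nat.sub_zero, ← hEnd]; exact ht₀v
      have := edges_eq_std_aux hn hS w.reverse hndr hallr h0r
      rw [← this]
      ext e
      simp [Walk.edges_reverse, List.mem_reverse]
    · -- interior: contradiction
      exfalso
      have ht1 : 0 < t₀ := by omega
      have ht2 : t₀ < w.length := by omega
      have ha1 := w.adj_getVert_succ (show t₀ - 1 < w.length by omega)
      rw [show t₀ - 1 + 1 = t₀ by omega] at ha1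
      have ha2 := w.adj_getVert_succ ht2
      have hc1 := adj_class hS ha1
      have hc2 := adj_class hS ha2
      rw [ht₀v] at hc1 hc2
      have e1 : (w.getVert (t₀-1)).val = 1 := by omega
      have e2 : (w.getVert (t₀+1)).val = 1 := by omega
      have : t₀ - 1 = t₀ + 1 :=
        hinj _ (by omega) _ (by omega) (Fin.ext (by omega))
      omega

def chainW {α : Type*} (H : SimpleGraph α) (f : ℕ → α) :
    (k : ℕ) → (∀ i, i < k → H.Adj (f i) (f (i+1))) → H.Walk (f 0) (f k)
  | 0, _ => Walk.nil
  | (k+1), h => (chainW H f k fun i hi => h i (by omega)).concat (h k (by omega))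

lemma chainW_support {α : Type*} (H : SimpleGraph α) (f : ℕ → α) :
    ∀ (k : ℕ) (h : ∀ i, i < k → H.Adj (f i) (f (i+1))),
      (chainW H f k h).support = (List.range (k+1)).map f
  | 0, h => by simp [chainW, List.range_succ]
  | (k+1), h => by
      rw [chainW, Walk.support_concat, chainW_support H f k, List.range_succ]
      simp [List.range_succ]
def CC : ℕ → Finset (ℕ × ℕ)
  | 0 => ∅
  | (n+1) => CC n ∪ (Finset.range ((n-2)/2)).image fun a => (2*a+1, n-1)

lemma CC_good : ∀ n, Good n (CC n) := by
  intro n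
  induction n with
  | zero => intro p hp; simp [CC] at hp
  | succ n ih =>
      intro p hp
      simp only [CC, Finset.mem_union, Finset.mem_image, Finset.mem_range] at hp
      rcases hp with hp | ⟨a, ha, rfl⟩
      · have := ih p hp; exact ⟨this.1, this.2.1, by omega⟩
      · refine ⟨by omega, by omega, by omega⟩

lemma CC_card : ∀ n, 2 ≤ n → (n-1)^2/4 + 1 ≤ (n-1) + (CC n).card := by
  intro n
  induction n with
  | zero => omega
  | succ n ih =>
      intro h2
      rcases Nat.lt_or_ge n 2 with hn | hn
      · interval_cases n
        · omega
        · simp [CC]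
      · have IH := ih hn
        have hdisj : Disjoint (CC n) ((Finset.range ((n-2)/2)).image fun a => (2*a+1, n-1)) := by
          rw [Finset.disjoint_left]
          intro p hp hp2
          have h1 := (CC_good n p hp).2.2
          simp only [Finset.mem_image, Finset.mem_range] at hp2
          obtain ⟨a, ha, rfl⟩ := hp2
          simp at h1
          omega
        have hinj : Function.Injective (fun a : ℕ => (2*a+1, n-1)) := by
          intro a b hab
          simp only [Prod.mk.injEq] at hab
          omega
        have hcard : (CC (n+1)).card = (CC n).card + (n-2)/2 := by
          show (CC n ∪ _).card = _
          rw [Finset.card_union_of_disjoint hdisj, Finset.card_image_of_injective _ hinj,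
            Finset.card_range]
        obtain ⟨m, rfl⟩ : ∃ m, n = m + 2 := ⟨n-2, by omega⟩
        rw [show m + 2 - 1 = m + 1 by omega] at IH
        rw [show m + 2 + 1 - 1 = m + 2 by omega]
        rw [show m + 2 - 2 = m by omega] at hcard
        rcases Nat.even_or_odd m with ⟨c, hc⟩ | ⟨c, hc⟩
        · subst hc
          have e1 : (c+c+2)^2 = 4*(c*c) + 8*c + 4 := by ring
          have e2 : (c+c+1)^2 = 4*(c*c) + 4*c + 1 := by ring
          omega
        · subst hc
          have e1 : (2*c+1+2)^2 = 4*(c*c) + 12*c + 9 := by ring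
          have e2 : (2*c+1+1)^2 = 4*(c*c) + 8*c + 4 := by ring
          omega
lemma edge_count (hn : 2 ≤ n) (hS : Good n S) :
    (UG n S).edgeSet.ncard = (n-1) + S.card := by
  have hn0 : 0 < n := by omega
  set fn : ℕ → Fin n := fun a => ⟨a % n, Nat.mod_lt _ hn0⟩ with hfn
  have fnval : ∀ a, a < n → (fn a).val = a := by
    intro a ha; simp [hfn, Nat.mod_eq_of_lt ha]
  set F : Finset (Sym2 (Fin n)) :=
    ((Finset.range (n-1)).image fun i => s(fn i, fn (i+1))) ∪
      (S.image fun p => s(fn p.1, fn p.2)) with hF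
  have hset : (UG n S).edgeSet = ↑F := by
    ext e
    induction e using Sym2.ind with
    | _ u v =>
      rw [mem_edgeSet]
      simp only [hF, Finset.coe_union, Set.mem_union, Finset.coe_image, Set.mem_image,
        Finset.mem_coe, Finset.mem_range]
      constructor
      · rintro ⟨hne, h | h | h | h⟩
        · left
          refine ⟨u.val, by have := v.isLt; omega, ?_⟩
          have h1 : fn u.val = u := Fin.ext (fnval _ u.isLt)
          have h2 : fn (u.val+1) = v := Fin.ext (by rw [fnval _ (by have := v.isLt; omega)]; omega)
          rw [h1, h2]
        · left
          refine ⟨v.val, by have := u.isLt; omega, ?_⟩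
          have h1 : fn v.val = v := Fin.ext (fnval _ v.isLt)
          have h2 : fn (v.val+1) = u := Fin.ext (by rw [fnval _ (by have := u.isLt; omega)]; omega)
          rw [h1, h2, Sym2.eq_swap]
        · right
          refine ⟨(u.val, v.val), h, ?_⟩
          have h1 : fn u.val = u := Fin.ext (fnval _ u.isLt)
          have h2 : fn v.val = v := Fin.ext (fnval _ v.isLt)
          rw [h1, h2]
        · right
          refine ⟨(v.val, u.val), h, ?_⟩
          have h1 : fn u.val = u := Fin.ext (fnval _ u.isLt)
          have h2 : fn v.val = v := Fin.ext (fnval _ v.isLt)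
          rw [h1, h2, Sym2.eq_swap]
      · rintro (⟨i, hi, he⟩ | ⟨p, hp, he⟩)
        · rw [Sym2.eq_iff] at he
          have v1 : (fn i).val = i := fnval _ (by omega)
          have v2 : (fn (i+1)).val = i+1 := fnval _ (by omega)
          rcases he with ⟨rfl, rfl⟩ | ⟨rfl, rfl⟩
          · exact ⟨Fin.ne_of_val_ne (by omega), Or.inl (by omega)⟩
          · exact ⟨Fin.ne_of_val_ne (by omega), Or.inr (Or.inl (by omega))⟩
        · rw [Sym2.eq_iff] at he
          obtain ⟨ho, hg, hb⟩ := hS p hp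
          have v1 : (fn p.1).val = p.1 := fnval _ (by omega)
          have v2 : (fn p.2).val = p.2 := fnval _ (by omega)
          rcases he with ⟨rfl, rfl⟩ | ⟨rfl, rfl⟩
          · refine ⟨Fin.ne_of_val_ne (by omega), Or.inr (Or.inr (Or.inl ?_))⟩
            rw [v1, v2]; simpa using hp
          · refine ⟨Fin.ne_of_val_ne (by omega), Or.inr (Or.inr (Or.inr ?_))⟩
            rw [v1, v2]; simpa using hp
  rw [hset, Set.ncard_coe_finset]
  have hdisj : Disjoint ((Finset.range (n-1)).image fun i => s(fn i, fn (i+1)))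
      (S.image fun p => s(fn p.1, fn p.2)) := by
    rw [Finset.disjoint_left]
    rintro e he1 he2
    simp only [Finset.mem_image, Finset.mem_range] at he1 he2
    obtain ⟨i, hi, rfl⟩ := he1
    obtain ⟨p, hp, hpe⟩ := he2
    obtain ⟨ho, hg, hb⟩ := hS p hp
    rw [Sym2.eq_iff] at hpe
    have v1 : (fn i).val = i := fnval _ (by omega)
    have v2 : (fn (i+1)).val = i+1 := fnval _ (by omega)
    have w1 : (fn p.1).val = p.1 := fnval _ (by omega)
    have w2 : (fn p.2).val = p.2 := fnval _ (by omega)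
    rcases hpe with ⟨h1, h2⟩ | ⟨h1, h2⟩ <;>
      · have a1 := congrArg Fin.val h1
        have a2 := congrArg Fin.val h2
        omega
  rw [Finset.card_union_of_disjoint hdisj]
  congr 1
  · rw [Finset.card_image_of_injOn, Finset.card_range]
    intro a ha b hb hab
    simp only [Finset.mem_coe, Finset.mem_range] at ha hb
    rw [Sym2.eq_iff] at hab
    have v1 : (fn a).val = a := fnval _ (by omega)
    have v2 : (fn (a+1)).val = a+1 := fnval _ (by omega)
    have v3 : (fn b).val = b := fnval _ (by omega)
    have v4 : (fn (b+1)).val = b+1 := fnval _ (by omega)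
    rcases hab with ⟨h1, h2⟩ | ⟨h1, h2⟩ <;>
      · have a1 := congrArg Fin.val h1
        have a2 := congrArg Fin.val h2
        omega
  · rw [Finset.card_image_of_injOn]
    intro p hp q hq hpq
    simp only [Finset.mem_coe] at hp hq
    obtain ⟨o1, g1, b1⟩ := hS p hp
    obtain ⟨o2, g2, b2⟩ := hS q hq
    rw [Sym2.eq_iff] at hpq
    have v1 : (fn p.1).val = p.1 := fnval _ (by omega)
    have v2 : (fn p.2).val = p.2 := fnval _ (by omega)
    have v3 : (fn q.1).val = q.1 := fnval _ (by omega)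
    have v4 : (fn q.2).val = q.2 := fnval _ (by omega)
    have : p.1 = q.1 ∧ p.2 = q.2 := by
      rcases hpq with ⟨h1, h2⟩ | ⟨h1, h2⟩ <;>
        · have a1 := congrArg Fin.val h1
          have a2 := congrArg Fin.val h2
          omega
    exact Prod.ext this.1 this.2
lemma ham_walk_exists (hn : 2 ≤ n) (hS : Good n S) :
    ∃ (u v : Fin n) (w : (UG n S).Walk u v),
      w.support.Nodup ∧ (∀ a, a ∈ w.support) := by
  have hn0 : 0 < n := by omega
  set f : ℕ → Fin n := fun i => ⟨min i (n-1), by omega⟩ with hf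
  have hfv : ∀ i, (f i).val = min i (n-1) := fun i => rfl
  have hadjf : ∀ i, i < n-1 → (UG n S).Adj (f i) (f (i+1)) := by
    intro i hi
    exact ⟨Fin.ne_of_val_ne (by rw [hfv, hfv]; omega), Or.inl (by rw [hfv, hfv]; omega)⟩
  refine ⟨f 0, f (n-1), chainW (UG n S) f (n-1) hadjf, ?_, ?_⟩
  · rw [chainW_support, show n-1+1 = n by omega]
    refine List.Nodup.map_on ?_ List.nodup_range
    intro x hx y hy hxy
    rw [List.mem_range] at hx hy
    have := congrArg Fin.val hxy
    rw [hfv, hfv] at this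
    omega
  · intro a
    rw [chainW_support, show n-1+1 = n by omega]
    refine List.mem_map.mpr ⟨a.val, List.mem_range.mpr a.isLt, ?_⟩
    apply Fin.ext
    rw [hfv]
    have := a.isLt
    omega

lemma nodup_all_of_ham {u v : Fin n} {w : (UG n S).Walk u v}
    (hw : letI := Classical.decEq (Fin n); w.IsHamiltonian) :
    w.support.Nodup ∧ (∀ a, a ∈ w.support) := by
  letI := Classical.decEq (Fin n)
  constructor
  · exact List.nodup_iff_count_le_one.mpr fun a => le_of_eq (hw a)
  · intro a
    by_contra hc
    have h := hw a
    rw [List.count_eq_zero_of_not_mem hc] at h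
    omega

lemma ham_of_nodup_all {u v : Fin n} {w : (UG n S).Walk u v}
    (hnd : w.support.Nodup) (hall : ∀ a, a ∈ w.support) :
    (letI := Classical.decEq (Fin n); w.IsHamiltonian) := by
  letI := Classical.decEq (Fin n)
  intro a
  have h1 := List.nodup_iff_count_le_one.mp hnd a
  have h2 : w.support.count a ≠ 0 := by
    intro h
    rw [List.count_eq_zero] at h
    exact h (hall a)
  omega

lemma hamPathCount_UG (hn : 2 ≤ n) (hS : Good n S) : hamPathCount (UG n S) = 1 := by
  have hsets : hamPathSets (UG n S) = {stdSet n} := by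
    ext s
    simp only [hamPathSets, Set.mem_setOf_eq, Set.mem_singleton_iff]
    constructor
    · rintro ⟨x, y, w, hw, rfl⟩
      obtain ⟨hnd, hall⟩ := nodup_all_of_ham hw
      exact edges_eq_std hn hS w hnd hall
    · rintro rfl
      obtain ⟨x, y, w, hnd, hall⟩ := ham_walk_exists hn hS
      exact ⟨x, y, w, ham_of_nodup_all hnd hall, edges_eq_std hn hS w hnd hall⟩
  rw [hamPathCount, hsets, Set.ncard_singleton]

end UT


theorem stmt16 (n m : ℕ) (hn : 2 ≤ n) (hm₁ : n - 1 ≤ m) (hm₂ : m ≤ (n - 1) ^ 2 / 4 + 1) :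
    ∃ G : SimpleGraph (Fin n), hamPathCount G = 1 ∧ G.edgeSet.ncard = m := by
  have hCC := UT.CC_card n hn
  obtain ⟨S, hSsub, hScard⟩ := Finset.exists_subset_card_eq (show m - (n-1) ≤ (UT.CC n).card by omega)
  have hS : UT.Good n S := fun p hp => UT.CC_good n p (hSsub hp)
  refine ⟨UT.UG n S, UT.hamPathCount_UG hn hS, ?_⟩
  rw [UT.edge_count hn hS, hScard]
  omega
end
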